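/- arXiv:1808.01432 — 3 statements merged into one kernel-verified Lean document; each statement's English description precedes it below -/
import Mathlib

section
/- Let kr_5(n,m) be the number of partitions of n into m parts with at most one occurrence of the part 1 and difference at least three at distance three, such that if parts at distance two differ by at most one then their sum together with the intermediate part is ≡ 1 (mod 3). Then ∑_{n,m≥0} kr_5(n,m) q^n x^m = ∑_{n_1,n_2,n_3≥0} q^{(9n_3²+5n_3)/2 + 2n_2² + n_2 + n_1² + 6n_3n_2 + 3n_3n_1 + 2n_2n_1} (−q;q²)_{n_2} x^{3n_3+2n_2+n_1} / ((q;q)_{n_1}(q²;q²)_{n_2}(q³;q³)_{n_3}). -/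
open Finset PowerSeries

/-- `l` is a partition of `n`: a nondecreasing list of positive integers summing to `n`. -/
def IsPartitionOf (n : ℕ) (l : List ℕ) : Prop :=
  l.Pairwise (· ≤ ·) ∧ (∀ x ∈ l, 0 < x) ∧ l.sum = n

/-- `l` has difference at least `k` at distance `d`. -/
def DiffCond (k d : ℕ) (l : List ℕ) : Prop :=
  ∀ (j : ℕ) (h : j + d < l.length), l[j]'(by omega) + k ≤ l[j + d]'h

/-- If two successive parts differ by at most one, then their sum is ≡ `r` (mod 3). -/
def SumCond2 (r : ℕ) (l : List ℕ) : Prop :=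
  ∀ (j : ℕ) (h : j + 1 < l.length),
    l[j + 1]'h ≤ l[j]'(by omega) + 1 → (l[j]'(by omega) + l[j + 1]'h) % 3 = r

/-- If parts at distance two differ by at most one, then their sum, together with the
intermediate part, is ≡ `r` (mod 3). -/
def SumCond3 (r : ℕ) (l : List ℕ) : Prop :=
  ∀ (j : ℕ) (h : j + 2 < l.length),
    l[j + 2]'h ≤ l[j]'(by omega) + 1 →
      (l[j]'(by omega) + l[j + 1]'(by omega) + l[j + 2]'h) % 3 = r

/-- `(q; q)_n` as a formal power series in `q = X`. -/
noncomputable def qq (n : ℕ) : PowerSeries ℚ :=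
  ∏ j ∈ Finset.range n, (1 - (X : PowerSeries ℚ) ^ (j + 1))

/-- `(q^2; q^2)_n`. -/
noncomputable def qsq (n : ℕ) : PowerSeries ℚ :=
  ∏ j ∈ Finset.range n, (1 - (X : PowerSeries ℚ) ^ (2 * (j + 1)))

/-- `(q^3; q^3)_n`. -/
noncomputable def qcube (n : ℕ) : PowerSeries ℚ :=
  ∏ j ∈ Finset.range n, (1 - (X : PowerSeries ℚ) ^ (3 * (j + 1)))

/-- `(q^4; q^4)_n`. -/
noncomputable def qfour (n : ℕ) : PowerSeries ℚ :=
  ∏ j ∈ Finset.range n, (1 - (X : PowerSeries ℚ) ^ (4 * (j + 1)))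

/-- `(-q; q^2)_n`. -/
noncomputable def nqodd (n : ℕ) : PowerSeries ℚ :=
  ∏ j ∈ Finset.range n, (1 + (X : PowerSeries ℚ) ^ (2 * j + 1))

/-- `kr₅ n m`: partitions of `n` into `m` parts with at most one occurrence of the part
1, difference at least three at distance three, such that if parts at distance two
differ by at most one, their sum together with the intermediate part is ≡ 1 (mod 3). -/
noncomputable def kr5 (n m : ℕ) : ℕ :=
  Set.ncard {l : List ℕ |
    IsPartitionOf n l ∧ l.length = m ∧ l.count 1 ≤ 1 ∧ DiffCond 3 3 l ∧ SumCond3 1 l}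

-- ===================== Sum side =====================
namespace KR5

noncomputable def Tt (p : ℕ × ℕ × ℕ) : PowerSeries ℚ :=
  (X : PowerSeries ℚ) ^
      ((9 * p.2.2 ^ 2 + 5 * p.2.2) / 2 + 2 * p.2.1 ^ 2 + p.2.1 + p.1 ^ 2 +
        6 * p.2.2 * p.2.1 + 3 * p.2.2 * p.1 + 2 * p.2.1 * p.1) *
    nqodd p.2.1 * (qq p.1 * qsq p.2.1 * qcube p.2.2)⁻¹

lemma Tt_def (a b c : ℕ) : Tt (a, b, c) =
    (X : PowerSeries ℚ) ^
      ((9 * c ^ 2 + 5 * c) / 2 + 2 * b ^ 2 + b + a ^ 2 + 6 * c * b + 3 * c * a + 2 * b * a) *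
    nqodd b * (qq a * qsq b * qcube c)⁻¹ := rfl

def idx (M : ℕ) : Finset (ℕ × ℕ × ℕ) :=
  (Finset.range (M + 1) ×ˢ Finset.range (M + 1) ×ˢ Finset.range (M + 1)).filter
    (fun p => p.1 + 2 * p.2.1 + 3 * p.2.2 = M)

lemma mem_idx {p : ℕ × ℕ × ℕ} {M : ℕ} : p ∈ idx M ↔ p.1 + 2 * p.2.1 + 3 * p.2.2 = M := by
  obtain ⟨a, b, c⟩ := p
  simp only [idx, Finset.mem_filter, Finset.mem_product, Finset.mem_range]
  constructor
  · rintro ⟨-, h⟩; exact h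
  · intro h; refine ⟨⟨?_, ?_, ?_⟩, h⟩ <;> omega

noncomputable def Rs (M : ℕ) : PowerSeries ℚ := ∑ p ∈ idx M, Tt p
noncomputable def Us (M : ℕ) : PowerSeries ℚ := ∑ p ∈ idx M, X ^ p.1 * Tt p
noncomputable def Vs (M : ℕ) : PowerSeries ℚ := ∑ p ∈ idx M, X ^ (p.1 + 2 * p.2.1) * Tt p
noncomputable def Es (M : ℕ) : PowerSeries ℚ := ∑ p ∈ idx M, X ^ (2 * p.2.1) * Tt p

lemma one_sub_X_pow_cc {k : ℕ} (hk : k ≠ 0) :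
    constantCoeff (1 - (X : PowerSeries ℚ) ^ k) ≠ 0 := by
  obtain ⟨j, rfl⟩ : ∃ j, k = j + 1 := ⟨k - 1, by omega⟩
  simp

lemma mul_inv_mul (f D : PowerSeries ℚ) (hf : constantCoeff f ≠ 0) :
    f * (f * D)⁻¹ = D⁻¹ := by
  rw [PowerSeries.mul_inv_rev]
  calc f * (D⁻¹ * f⁻¹) = D⁻¹ * (f * f⁻¹) := by ring
  _ = D⁻¹ := by rw [PowerSeries.mul_inv_cancel f hf, mul_one]

lemma T1 (a b c : ℕ) :
    (1 - (X : PowerSeries ℚ) ^ (a + 1)) * Tt (a + 1, b, c)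
      = X ^ (2 * a + 1 + 2 * b + 3 * c) * Tt (a, b, c) := by
  have hq : qq (a + 1) = qq a * (1 - (X : PowerSeries ℚ) ^ (a + 1)) :=
    Finset.prod_range_succ _ a
  have hD : qq (a + 1) * qsq b * qcube c
      = (1 - (X : PowerSeries ℚ) ^ (a + 1)) * (qq a * qsq b * qcube c) := by
    rw [hq]; ring
  have hexp : (9 * c ^ 2 + 5 * c) / 2 + 2 * b ^ 2 + b + (a + 1) ^ 2 +
      6 * c * b + 3 * c * (a + 1) + 2 * b * (a + 1)
      = (2 * a + 1 + 2 * b + 3 * c) +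
        ((9 * c ^ 2 + 5 * c) / 2 + 2 * b ^ 2 + b + a ^ 2 +
          6 * c * b + 3 * c * a + 2 * b * a) := by
    generalize (9 * c ^ 2 + 5 * c) / 2 = t
    ring
  have hX : (X : PowerSeries ℚ) ^ ((9 * c ^ 2 + 5 * c) / 2 + 2 * b ^ 2 + b + (a + 1) ^ 2 +
      6 * c * b + 3 * c * (a + 1) + 2 * b * (a + 1))
      = X ^ (2 * a + 1 + 2 * b + 3 * c) *
        X ^ ((9 * c ^ 2 + 5 * c) / 2 + 2 * b ^ 2 + b + a ^ 2 +
          6 * c * b + 3 * c * a + 2 * b * a) := by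
    rw [hexp, pow_add]
  have hc := mul_inv_mul (1 - (X : PowerSeries ℚ) ^ (a + 1)) (qq a * qsq b * qcube c)
    (one_sub_X_pow_cc (by omega))
  rw [Tt_def, Tt_def, hD, hX]
  calc (1 - (X : PowerSeries ℚ) ^ (a+1)) *
        (X ^ (2*a+1+2*b+3*c) * X ^ ((9*c^2+5*c)/2 + 2*b^2 + b + a^2 + 6*c*b + 3*c*a + 2*b*a) *
          nqodd b * ((1 - (X : PowerSeries ℚ) ^ (a+1)) * (qq a * qsq b * qcube c))⁻¹)
      = X ^ (2*a+1+2*b+3*c) *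
          (X ^ ((9*c^2+5*c)/2 + 2*b^2 + b + a^2 + 6*c*b + 3*c*a + 2*b*a) * nqodd b) *
          ((1 - (X : PowerSeries ℚ) ^ (a+1)) *
            ((1 - (X : PowerSeries ℚ) ^ (a+1)) * (qq a * qsq b * qcube c))⁻¹) := by ring
    _ = _ := by rw [hc]; ring

lemma T2 (a b c : ℕ) :
    (1 - (X : PowerSeries ℚ) ^ (2 * (b + 1))) * Tt (a, b + 1, c)
      = X ^ (2 * a + 4 * b + 6 * c + 3) * (1 + X ^ (2 * b + 1)) * Tt (a, b, c) := by
  have hq : qsq (b + 1) = qsq b * (1 - (X : PowerSeries ℚ) ^ (2 * (b + 1))) :=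
    Finset.prod_range_succ _ b
  have hn : nqodd (b + 1) = nqodd b * (1 + (X : PowerSeries ℚ) ^ (2 * b + 1)) :=
    Finset.prod_range_succ _ b
  have hD : qq a * qsq (b + 1) * qcube c
      = (1 - (X : PowerSeries ℚ) ^ (2 * (b + 1))) * (qq a * qsq b * qcube c) := by
    rw [hq]; ring
  have hexp : (9 * c ^ 2 + 5 * c) / 2 + 2 * (b + 1) ^ 2 + (b + 1) + a ^ 2 +
      6 * c * (b + 1) + 3 * c * a + 2 * (b + 1) * a
      = (2 * a + 4 * b + 6 * c + 3) +
        ((9 * c ^ 2 + 5 * c) / 2 + 2 * b ^ 2 + b + a ^ 2 +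
          6 * c * b + 3 * c * a + 2 * b * a) := by
    generalize (9 * c ^ 2 + 5 * c) / 2 = t
    ring
  have hX : (X : PowerSeries ℚ) ^ ((9 * c ^ 2 + 5 * c) / 2 + 2 * (b + 1) ^ 2 + (b + 1) + a ^ 2 +
      6 * c * (b + 1) + 3 * c * a + 2 * (b + 1) * a)
      = X ^ (2 * a + 4 * b + 6 * c + 3) *
        X ^ ((9 * c ^ 2 + 5 * c) / 2 + 2 * b ^ 2 + b + a ^ 2 +
          6 * c * b + 3 * c * a + 2 * b * a) := by
    rw [hexp, pow_add]
  have hc := mul_inv_mul (1 - (X : PowerSeries ℚ) ^ (2 * (b + 1))) (qq a * qsq b * qcube c)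
    (one_sub_X_pow_cc (by omega))
  rw [Tt_def, Tt_def, hD, hX, hn]
  calc (1 - (X : PowerSeries ℚ) ^ (2*(b+1))) *
        (X ^ (2*a+4*b+6*c+3) * X ^ ((9*c^2+5*c)/2 + 2*b^2 + b + a^2 + 6*c*b + 3*c*a + 2*b*a) *
          (nqodd b * (1 + (X : PowerSeries ℚ) ^ (2*b+1))) *
          ((1 - (X : PowerSeries ℚ) ^ (2*(b+1))) * (qq a * qsq b * qcube c))⁻¹)
      = X ^ (2*a+4*b+6*c+3) * (1 + (X : PowerSeries ℚ) ^ (2*b+1)) *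
          (X ^ ((9*c^2+5*c)/2 + 2*b^2 + b + a^2 + 6*c*b + 3*c*a + 2*b*a) * nqodd b) *
          ((1 - (X : PowerSeries ℚ) ^ (2*(b+1))) *
            ((1 - (X : PowerSeries ℚ) ^ (2*(b+1))) * (qq a * qsq b * qcube c))⁻¹) := by ring
    _ = _ := by rw [hc]; ring

lemma T3 (a b c : ℕ) :
    (1 - (X : PowerSeries ℚ) ^ (3 * (c + 1))) * Tt (a, b, c + 1)
      = X ^ (3 * a + 6 * b + 9 * c + 7) * Tt (a, b, c) := by
  have hq : qcube (c + 1) = qcube c * (1 - (X : PowerSeries ℚ) ^ (3 * (c + 1))) :=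
    Finset.prod_range_succ _ c
  have hD : qq a * qsq b * qcube (c + 1)
      = (1 - (X : PowerSeries ℚ) ^ (3 * (c + 1))) * (qq a * qsq b * qcube c) := by
    rw [hq]; ring
  have heven : 2 ∣ 9 * c ^ 2 + 5 * c := by
    have hnl : c * (c + 1) = c ^ 2 + c := by ring
    have := Nat.even_mul_succ_self c
    rw [Nat.even_iff] at this
    omega
  have hexp : (9 * (c + 1) ^ 2 + 5 * (c + 1)) / 2 + 2 * b ^ 2 + b + a ^ 2 +
      6 * (c + 1) * b + 3 * (c + 1) * a + 2 * b * a
      = (3 * a + 6 * b + 9 * c + 7) +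
        ((9 * c ^ 2 + 5 * c) / 2 + 2 * b ^ 2 + b + a ^ 2 +
          6 * c * b + 3 * c * a + 2 * b * a) := by
    have h1 : 9 * (c + 1) ^ 2 + 5 * (c + 1) = (9 * c ^ 2 + 5 * c) + (18 * c + 14) := by ring
    rw [h1]
    obtain ⟨k, hk⟩ := heven
    have h6 : 6 * (c + 1) * b = 6 * c * b + 6 * b := by ring
    have h3 : 3 * (c + 1) * a = 3 * c * a + 3 * a := by ring
    rw [hk, h6, h3]
    omega
  have hX : (X : PowerSeries ℚ) ^ ((9 * (c + 1) ^ 2 + 5 * (c + 1)) / 2 + 2 * b ^ 2 + b + a ^ 2 +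
      6 * (c + 1) * b + 3 * (c + 1) * a + 2 * b * a)
      = X ^ (3 * a + 6 * b + 9 * c + 7) *
        X ^ ((9 * c ^ 2 + 5 * c) / 2 + 2 * b ^ 2 + b + a ^ 2 +
          6 * c * b + 3 * c * a + 2 * b * a) := by
    rw [hexp, pow_add]
  have hc := mul_inv_mul (1 - (X : PowerSeries ℚ) ^ (3 * (c + 1))) (qq a * qsq b * qcube c)
    (one_sub_X_pow_cc (by omega))
  rw [Tt_def, Tt_def, hD, hX]
  calc (1 - (X : PowerSeries ℚ) ^ (3*(c+1))) *
        (X ^ (3*a+6*b+9*c+7) * X ^ ((9*c^2+5*c)/2 + 2*b^2 + b + a^2 + 6*c*b + 3*c*a + 2*b*a) *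
          nqodd b * ((1 - (X : PowerSeries ℚ) ^ (3*(c+1))) * (qq a * qsq b * qcube c))⁻¹)
      = X ^ (3*a+6*b+9*c+7) *
          (X ^ ((9*c^2+5*c)/2 + 2*b^2 + b + a^2 + 6*c*b + 3*c*a + 2*b*a) * nqodd b) *
          ((1 - (X : PowerSeries ℚ) ^ (3*(c+1))) *
            ((1 - (X : PowerSeries ℚ) ^ (3*(c+1))) * (qq a * qsq b * qcube c))⁻¹) := by ring
    _ = _ := by rw [hc]; ring

end KR5

namespace KR5

lemma S1 (w : ℕ × ℕ × ℕ → PowerSeries ℚ) (M : ℕ) :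
    ∑ p ∈ idx (M + 1), w p * ((1 - (X : PowerSeries ℚ) ^ p.1) * Tt p)
      = X ^ (M + 1) * ∑ p ∈ idx M, w (p.1 + 1, p.2.1, p.2.2) * (X ^ p.1 * Tt p) := by
  rw [Finset.mul_sum]
  rw [← Finset.sum_filter_add_sum_filter_not (idx (M + 1)) (fun p => p.1 = 0)]
  have h0 : ∑ p ∈ (idx (M + 1)).filter (fun p => p.1 = 0),
      w p * ((1 - (X : PowerSeries ℚ) ^ p.1) * Tt p) = 0 := by
    apply Finset.sum_eq_zero
    intro p hp
    have h1 : p.1 = 0 := (Finset.mem_filter.mp hp).2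
    rw [h1, pow_zero, sub_self, zero_mul, mul_zero]
  rw [h0, zero_add]
  refine (Finset.sum_nbij' (fun p : ℕ × ℕ × ℕ => (p.1 + 1, p.2.1, p.2.2))
    (fun p : ℕ × ℕ × ℕ => (p.1 - 1, p.2.1, p.2.2)) ?_ ?_ ?_ ?_ ?_).symm
  · rintro ⟨a, b, c⟩ h
    simp only [mem_idx] at h
    simp only [Finset.mem_filter, mem_idx]
    exact ⟨by omega, by omega⟩
  · rintro ⟨a, b, c⟩ h
    simp only [Finset.mem_filter, mem_idx] at h
    simp only [mem_idx]
    omega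
  · rintro ⟨a, b, c⟩ h
    simp
  · rintro ⟨a, b, c⟩ h
    simp only [Finset.mem_filter, mem_idx] at h
    show (a - 1 + 1, b, c) = (a, b, c)
    have : a - 1 + 1 = a := by omega
    rw [this]
  · rintro ⟨a, b, c⟩ h
    simp only [mem_idx] at h
    dsimp only
    rw [T1 a b c]
    rw [show 2 * a + 1 + 2 * b + 3 * c = (M + 1) + a by omega, pow_add]
    ring

lemma S2 (w : ℕ × ℕ × ℕ → PowerSeries ℚ) (M : ℕ) :
    ∑ p ∈ idx (M + 2), w p * ((1 - (X : PowerSeries ℚ) ^ (2 * p.2.1)) * Tt p)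
      = ∑ p ∈ idx M, w (p.1, p.2.1 + 1, p.2.2) *
          ((X ^ (2 * M + 3) + X ^ (2 * M + 4 + 2 * p.2.1)) * Tt p) := by
  rw [← Finset.sum_filter_add_sum_filter_not (idx (M + 2)) (fun p => p.2.1 = 0)]
  have h0 : ∑ p ∈ (idx (M + 2)).filter (fun p => p.2.1 = 0),
      w p * ((1 - (X : PowerSeries ℚ) ^ (2 * p.2.1)) * Tt p) = 0 := by
    apply Finset.sum_eq_zero
    intro p hp
    have h1 : p.2.1 = 0 := (Finset.mem_filter.mp hp).2
    rw [h1, Nat.mul_zero, pow_zero, sub_self, zero_mul, mul_zero]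
  rw [h0, zero_add]
  refine (Finset.sum_nbij' (fun p : ℕ × ℕ × ℕ => (p.1, p.2.1 + 1, p.2.2))
    (fun p : ℕ × ℕ × ℕ => (p.1, p.2.1 - 1, p.2.2)) ?_ ?_ ?_ ?_ ?_).symm
  · rintro ⟨a, b, c⟩ h
    simp only [mem_idx] at h
    simp only [Finset.mem_filter, mem_idx]
    exact ⟨by omega, by omega⟩
  · rintro ⟨a, b, c⟩ h
    simp only [Finset.mem_filter, mem_idx] at h
    simp only [mem_idx]
    omega
  · rintro ⟨a, b, c⟩ h
    simp
  · rintro ⟨a, b, c⟩ h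
    simp only [Finset.mem_filter, mem_idx] at h
    show (a, b - 1 + 1, c) = (a, b, c)
    have : b - 1 + 1 = b := by omega
    rw [this]
  · rintro ⟨a, b, c⟩ h
    simp only [mem_idx] at h
    dsimp only
    rw [T2 a b c]
    rw [show 2 * a + 4 * b + 6 * c + 3 = 2 * M + 3 by omega]
    rw [show 2 * M + 4 + 2 * b = (2 * M + 3) + (2 * b + 1) by omega, pow_add]
    ring

lemma S3 (w : ℕ × ℕ × ℕ → PowerSeries ℚ) (M : ℕ) :
    ∑ p ∈ idx (M + 3), w p * ((1 - (X : PowerSeries ℚ) ^ (3 * p.2.2)) * Tt p)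
      = X ^ (3 * M + 7) * ∑ p ∈ idx M, w (p.1, p.2.1, p.2.2 + 1) * Tt p := by
  rw [Finset.mul_sum]
  rw [← Finset.sum_filter_add_sum_filter_not (idx (M + 3)) (fun p => p.2.2 = 0)]
  have h0 : ∑ p ∈ (idx (M + 3)).filter (fun p => p.2.2 = 0),
      w p * ((1 - (X : PowerSeries ℚ) ^ (3 * p.2.2)) * Tt p) = 0 := by
    apply Finset.sum_eq_zero
    intro p hp
    have h1 : p.2.2 = 0 := (Finset.mem_filter.mp hp).2
    rw [h1, Nat.mul_zero, pow_zero, sub_self, zero_mul, mul_zero]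
  rw [h0, zero_add]
  refine (Finset.sum_nbij' (fun p : ℕ × ℕ × ℕ => (p.1, p.2.1, p.2.2 + 1))
    (fun p : ℕ × ℕ × ℕ => (p.1, p.2.1, p.2.2 - 1)) ?_ ?_ ?_ ?_ ?_).symm
  · rintro ⟨a, b, c⟩ h
    simp only [mem_idx] at h
    simp only [Finset.mem_filter, mem_idx]
    exact ⟨by omega, by omega⟩
  · rintro ⟨a, b, c⟩ h
    simp only [Finset.mem_filter, mem_idx] at h
    simp only [mem_idx]
    omega
  · rintro ⟨a, b, c⟩ h
    simp
  · rintro ⟨a, b, c⟩ h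
    simp only [Finset.mem_filter, mem_idx] at h
    show (a, b, c - 1 + 1) = (a, b, c)
    have : c - 1 + 1 = c := by omega
    rw [this]
  · rintro ⟨a, b, c⟩ h
    simp only [mem_idx] at h
    dsimp only
    rw [T3 a b c]
    rw [show 3 * a + 6 * b + 9 * c + 7 = 3 * M + 7 by omega]
    ring

end KR5

namespace KR5

lemma S1R (M : ℕ) : Rs (M + 1) - Us (M + 1) = X ^ (M + 1) * Us M := by
  have h1 : Rs (M + 1) - Us (M + 1)
      = ∑ p ∈ idx (M + 1), (1 : PowerSeries ℚ) * ((1 - X ^ p.1) * Tt p) := by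
    rw [Rs, Us, ← Finset.sum_sub_distrib]
    exact Finset.sum_congr rfl fun p _ => by ring
  rw [h1, S1 (fun _ => 1) M, Us]
  congr 1
  exact Finset.sum_congr rfl fun p _ => by ring

lemma S1E (M : ℕ) : Es (M + 1) - Vs (M + 1) = X ^ (M + 1) * Vs M := by
  have h1 : Es (M + 1) - Vs (M + 1)
      = ∑ p ∈ idx (M + 1), (X : PowerSeries ℚ) ^ (2 * p.2.1) * ((1 - X ^ p.1) * Tt p) := by
    rw [Es, Vs, ← Finset.sum_sub_distrib]
    refine Finset.sum_congr rfl fun p _ => ?_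
    rw [pow_add]
    ring
  rw [h1, S1 (fun p => X ^ (2 * p.2.1)) M, Vs]
  congr 1
  refine Finset.sum_congr rfl fun p _ => ?_
  rw [pow_add]
  ring

lemma E1Gen (M : ℕ) : Es (M + 2)
    = Rs (M + 2) - X ^ (2 * M + 3) * Rs M - X ^ (2 * M + 4) * Es M := by
  have h1 : Rs (M + 2) - Es (M + 2)
      = ∑ p ∈ idx (M + 2), (1 : PowerSeries ℚ) * ((1 - X ^ (2 * p.2.1)) * Tt p) := by
    rw [Rs, Es, ← Finset.sum_sub_distrib]
    exact Finset.sum_congr rfl fun p _ => by ring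
  have h2 := S2 (fun _ => 1) M
  rw [h2] at h1
  have h3 : ∑ p ∈ idx M, (1 : PowerSeries ℚ) *
      ((X ^ (2 * M + 3) + X ^ (2 * M + 4 + 2 * p.2.1)) * Tt p)
      = X ^ (2 * M + 3) * Rs M + X ^ (2 * M + 4) * Es M := by
    rw [Rs, Es, Finset.mul_sum, Finset.mul_sum, ← Finset.sum_add_distrib]
    refine Finset.sum_congr rfl fun p _ => ?_
    rw [show 2 * M + 4 + 2 * p.2.1 = (2 * M + 4) + 2 * p.2.1 from rfl, pow_add]
    ring
  rw [h3] at h1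
  linear_combination -h1

lemma US2 (M : ℕ) : Us (M + 2) - Vs (M + 2)
    = X ^ (2 * M + 3) * Us M + X ^ (2 * M + 4) * Vs M := by
  have h1 : Us (M + 2) - Vs (M + 2)
      = ∑ p ∈ idx (M + 2), (X : PowerSeries ℚ) ^ p.1 * ((1 - X ^ (2 * p.2.1)) * Tt p) := by
    rw [Us, Vs, ← Finset.sum_sub_distrib]
    refine Finset.sum_congr rfl fun p _ => ?_
    rw [pow_add]
    ring
  rw [h1, S2 (fun p => X ^ p.1) M]
  rw [Us, Vs, Finset.mul_sum, Finset.mul_sum, ← Finset.sum_add_distrib]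
  refine Finset.sum_congr rfl fun p _ => ?_
  rw [show 2 * M + 4 + 2 * p.2.1 = (2 * M + 4) + 2 * p.2.1 from rfl, pow_add, pow_add]
  ring

lemma VS3 (M : ℕ) :
    ∑ p ∈ idx (M + 3), (X : PowerSeries ℚ) ^ (p.1 + 2 * p.2.1) *
      ((1 - X ^ (3 * p.2.2)) * Tt p) = X ^ (3 * M + 7) * Vs M := by
  rw [S3 (fun p => X ^ (p.1 + 2 * p.2.1)) M, Vs]

lemma split (L : ℕ) : (1 - (X : PowerSeries ℚ) ^ L) * Rs L
    = (∑ p ∈ idx L, (1 : PowerSeries ℚ) * ((1 - X ^ p.1) * Tt p))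
      + (∑ p ∈ idx L, (X : PowerSeries ℚ) ^ p.1 * ((1 - X ^ (2 * p.2.1)) * Tt p))
      + (∑ p ∈ idx L, (X : PowerSeries ℚ) ^ (p.1 + 2 * p.2.1) *
          ((1 - X ^ (3 * p.2.2)) * Tt p)) := by
  rw [Rs, Finset.mul_sum, ← Finset.sum_add_distrib, ← Finset.sum_add_distrib]
  refine Finset.sum_congr rfl fun p hp => ?_
  have h := mem_idx.mp hp
  rw [← h, pow_add, pow_add]
  ring

lemma IhatGen (M : ℕ) : (1 - (X : PowerSeries ℚ) ^ (M + 3)) * Rs (M + 3)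
    = X ^ (M + 3) * Rs (M + 2) + X ^ (2 * M + 6) * Es (M + 1) := by
  have hsplit := split (M + 3)
  have e1 : ∑ p ∈ idx (M + 3), (1 : PowerSeries ℚ) * ((1 - X ^ p.1) * Tt p)
      = X ^ (M + 3) * Us (M + 2) := by
    rw [show M + 3 = (M + 2) + 1 from rfl, S1 (fun _ => 1) (M + 2), Us]
    congr 1
    exact Finset.sum_congr rfl fun p _ => by ring
  have e2 : ∑ p ∈ idx (M + 3), (X : PowerSeries ℚ) ^ p.1 * ((1 - X ^ (2 * p.2.1)) * Tt p)
      = X ^ (2 * M + 5) * Us (M + 1) + X ^ (2 * M + 6) * Vs (M + 1) := by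
    rw [show M + 3 = (M + 1) + 2 from rfl, S2 (fun p => X ^ p.1) (M + 1)]
    rw [Us, Vs, Finset.mul_sum, Finset.mul_sum, ← Finset.sum_add_distrib]
    refine Finset.sum_congr rfl fun p _ => ?_
    rw [show 2 * (M + 1) + 3 = 2 * M + 5 by ring, show 2 * (M + 1) + 4 + 2 * p.2.1
      = (2 * M + 6) + 2 * p.2.1 by ring, pow_add, pow_add]
    ring
  have e3 := VS3 M
  have e4 := S1R (M + 1)
  have e5 := S1E M
  rw [show (M+1)+1 = M+2 from rfl] at e4
  calc (1 - (X : PowerSeries ℚ) ^ (M + 3)) * Rs (M + 3)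
      = _ := hsplit
    _ = X ^ (M + 3) * Us (M + 2) + (X ^ (2 * M + 5) * Us (M + 1)
          + X ^ (2 * M + 6) * Vs (M + 1)) + X ^ (3 * M + 7) * Vs M := by rw [e1, e2, e3]
    _ = X ^ (M + 3) * Rs (M + 2) + X ^ (2 * M + 6) * Es (M + 1) := by
        have h4 : Us (M + 2) = Rs (M + 2) - X ^ (M + 2) * Us (M + 1) := by
          linear_combination -e4
        have h5 : Vs (M + 1) = Es (M + 1) - X ^ (M + 1) * Vs M := by
          linear_combination -e5
        rw [h4, h5]
        rw [show 2*M+5 = (M+3)+(M+2) by ring, show 3*M+7 = (2*M+6)+(M+1) by ring,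
          pow_add, pow_add]
        ring

lemma idx_zero : idx 0 = {(0, 0, 0)} := by decide
lemma idx_one : idx 1 = {(1, 0, 0)} := by decide
lemma idx_two : idx 2 = {(2, 0, 0), (0, 1, 0)} := by decide

lemma Rs_zero : Rs 0 = 1 := by
  rw [Rs, idx_zero, Finset.sum_singleton, Tt_def]
  have h1 : qq 0 * qsq 0 * qcube 0 = 1 := by
    simp [qq, qsq, qcube]
  rw [h1]
  have h2 : (1 : PowerSeries ℚ)⁻¹ = 1 := by
    have := PowerSeries.mul_inv_cancel (1 : PowerSeries ℚ) (by simp)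
    rwa [one_mul] at this
  rw [h2]
  simp [nqodd]

lemma Es_zero : Es 0 = 1 := by
  rw [Es, idx_zero, Finset.sum_singleton]
  have : Rs 0 = 1 := Rs_zero
  rw [Rs, idx_zero, Finset.sum_singleton] at this
  simpa using this

lemma Vs_zero_eq : Vs 0 = Es 0 := by
  rw [Vs, Es, idx_zero, Finset.sum_singleton, Finset.sum_singleton]
  norm_num

lemma Es_one : Es 1 = Rs 1 := by
  rw [Es, Rs, idx_one, Finset.sum_singleton, Finset.sum_singleton]
  norm_num

lemma Ihat1 : (1 - (X : PowerSeries ℚ)) * Rs 1 = X * Rs 0 := by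
  rw [Rs, Rs, idx_one, idx_zero, Finset.sum_singleton, Finset.sum_singleton]
  simpa using T1 0 0 0

lemma Ihat2 : (1 - (X : PowerSeries ℚ) ^ 2) * Rs 2 = X ^ 2 * Rs 1 + X ^ 4 * Es 0 := by
  have hsplit := split 2
  have e1 : ∑ p ∈ idx 2, (1 : PowerSeries ℚ) * ((1 - X ^ p.1) * Tt p)
      = X ^ 2 * Us 1 := by
    rw [show (2:ℕ) = 1 + 1 from rfl, S1 (fun _ => 1) 1, Us]
    congr 1
    exact Finset.sum_congr rfl fun p _ => by ring
  have e2 : ∑ p ∈ idx 2, (X : PowerSeries ℚ) ^ p.1 * ((1 - X ^ (2 * p.2.1)) * Tt p)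
      = X ^ 3 * Us 0 + X ^ 4 * Vs 0 := by
    rw [show (2:ℕ) = 0 + 2 from rfl, S2 (fun p => X ^ p.1) 0]
    rw [Us, Vs, Finset.mul_sum, Finset.mul_sum, ← Finset.sum_add_distrib]
    refine Finset.sum_congr rfl fun p _ => ?_
    rw [show 2 * 0 + 3 = 3 by ring, show 2 * 0 + 4 + 2 * p.2.1 = 4 + 2 * p.2.1 by ring,
      pow_add, pow_add]
    ring
  have e3 : ∑ p ∈ idx 2, (X : PowerSeries ℚ) ^ (p.1 + 2 * p.2.1) *
      ((1 - X ^ (3 * p.2.2)) * Tt p) = 0 := by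
    apply Finset.sum_eq_zero
    intro p hp
    have h := mem_idx.mp hp
    have hc : p.2.2 = 0 := by omega
    rw [hc, Nat.mul_zero, pow_zero, sub_self, zero_mul, mul_zero]
  have e4 := S1R 0
  have e5 := Vs_zero_eq
  calc (1 - (X : PowerSeries ℚ) ^ 2) * Rs 2
      = _ := hsplit
    _ = X ^ 2 * Us 1 + (X ^ 3 * Us 0 + X ^ 4 * Vs 0) + 0 := by rw [e1, e2, e3]
    _ = X ^ 2 * Rs 1 + X ^ 4 * Es 0 := by
        have h4 : Us 1 = Rs 1 - X ^ 1 * Us 0 := by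
          have := e4
          rw [show (0:ℕ)+1 = 1 from rfl] at this
          linear_combination -this
        rw [h4, ← e5]
        ring

end KR5

-- ===================== Combinatorial side =====================
namespace KR5

def SA (n m : ℕ) : Set (List ℕ) :=
  {l : List ℕ |
    IsPartitionOf n l ∧ l.length = m ∧ l.count 1 ≤ 1 ∧ DiffCond 3 3 l ∧ SumCond3 1 l}

def SC (n m : ℕ) : Set (List ℕ) :=
  {l : List ℕ | IsPartitionOf n l ∧ l.length = m ∧ DiffCond 3 3 l ∧ SumCond3 1 l}

def SE (n m : ℕ) : Set (List ℕ) :=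
  {l : List ℕ | IsPartitionOf n l ∧ l.length = m ∧ DiffCond 3 3 l ∧ SumCond3 1 l ∧
    ∀ (_ : 1 < l.length), 3 ≤ l[1]}

def u1 (l : List ℕ) : List ℕ := l.map (· + 1)
def cu1 (t : List ℕ) : List ℕ := 1 :: t.map (· + 1)
def ccu1 (t : List ℕ) : List ℕ := 1 :: 1 :: t.map (· + 1)
def cu2 (t : List ℕ) : List ℕ := 1 :: t.map (· + 2)

-- basic map lemmas
lemma sum_map_add (l : List ℕ) (c : ℕ) : (l.map (· + c)).sum = l.sum + c * l.length := by
  induction l with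
  | nil => simp
  | cons x t ih => simp [ih]; ring

lemma sorted_map_add (l : List ℕ) (c : ℕ) :
    (l.map (· + c)).Pairwise (· ≤ ·) ↔ l.Pairwise (· ≤ ·) := by
  rw [List.pairwise_map]
  constructor
  · intro h; exact h.imp (by omega)
  · intro h; exact h.imp (by omega)

lemma diffCond_map_add (l : List ℕ) (c k d : ℕ) :
    DiffCond k d (l.map (· + c)) ↔ DiffCond k d l := by
  unfold DiffCond
  constructor
  · intro H j h
    have h' : j + d < (l.map (· + c)).length := by simpa using h
    have := H j h'
    simp only [List.getElem_map] at this
    omega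
  · intro H j h
    have h' : j + d < l.length := by simpa using h
    have := H j h'
    simp only [List.getElem_map]
    omega

lemma sumCond3_map_add (l : List ℕ) (c : ℕ) :
    SumCond3 1 (l.map (· + c)) ↔ SumCond3 1 l := by
  unfold SumCond3
  constructor
  · intro H j h
    have h' : j + 2 < (l.map (· + c)).length := by simpa using h
    have := H j h'
    simp only [List.getElem_map] at this
    intro hle
    have h2 := this (by omega)
    omega
  · intro H j h
    have h' : j + 2 < l.length := by simpa using h
    have := H j h'
    simp only [List.getElem_map]
    intro hle
    have h2 := this (by omega)
    omega

lemma diffCond_cons (a : ℕ) (t : List ℕ) :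
    DiffCond 3 3 (a :: t) ↔ DiffCond 3 3 t ∧ (∀ (_ : 2 < t.length), a + 3 ≤ t[2]) := by
  unfold DiffCond
  constructor
  · intro H
    constructor
    · intro j h
      have h' : (j + 1) + 3 < (a :: t).length := by simp; omega
      have := H (j + 1) h'
      simpa using this
    · intro h
      have h' : 0 + 3 < (a :: t).length := by simp; omega
      have := H 0 h'
      simpa using this
  · rintro ⟨H, Hb⟩ j h
    match j with
    | 0 =>
      have h2 : 2 < t.length := by simp at h; omega
      simpa using Hb h2
    | (j' + 1) =>
      have h2 : j' + 3 < t.length := by simp at h; omega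
      simpa using H j' h2

lemma sumCond3_cons (a : ℕ) (t : List ℕ) :
    SumCond3 1 (a :: t) ↔ SumCond3 1 t ∧
      (∀ (h : 1 < t.length), t[1] ≤ a + 1 →
        (a + t[0]'(by omega) + t[1]) % 3 = 1) := by
  unfold SumCond3
  constructor
  · intro H
    constructor
    · intro j h
      have h' : (j + 1) + 2 < (a :: t).length := by simp; omega
      have := H (j + 1) h'
      simpa using this
    · intro h hle
      have h' : 0 + 2 < (a :: t).length := by simp; omega
      have := H 0 h'
      simpa using this (by simpa using hle)
  · rintro ⟨H, Hb⟩ j h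
    match j with
    | 0 =>
      have h2 : 1 < t.length := by simp at h; omega
      intro hle
      have := Hb h2 (by simpa using hle)
      simpa using this
    | (j' + 1) =>
      have h2 : j' + 2 < t.length := by simp at h; omega
      intro hle
      have := H j' h2 (by simpa using hle)
      simpa using this

-- structural helpers
lemma head_one (l : List ℕ) (hs : l.Pairwise (· ≤ ·)) (hp : ∀ x ∈ l, 0 < x)
    (h1 : (1 : ℕ) ∈ l) : ∃ t, l = 1 :: t := by
  match l with
  | [] => simp at h1
  | x :: t =>
    rcases List.mem_cons.mp h1 with h | h
    · exact ⟨t, by rw [h]⟩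
    · have hx1 : x ≤ 1 := (List.pairwise_cons.mp hs).1 1 h
      have hx0 : 0 < x := hp x (by simp)
      have : x = 1 := by omega
      exact ⟨t, by rw [this]⟩

lemma two_le_count (l : List ℕ) (v : ℕ) (hs : l.Pairwise (· ≤ ·)) (hp : ∀ x ∈ l, v ≤ x)
    (h : 2 ≤ l.count v) : ∃ t, l = v :: v :: t := by
  match l with
  | [] => simp at h
  | [x] =>
    have := List.count_le_length (a := v) (l := [x])
    simp at this
    omega
  | x :: y :: t =>
    have hxy : x ≤ y := (List.pairwise_cons.mp hs).1 y (by simp)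
    have hvx : v ≤ x := hp x (by simp)
    have hx : x = v := by
      by_contra hne
      have hmem : v ∈ y :: t := by
        have hc : (x :: y :: t).count v = (y :: t).count v := by
          rw [List.count_cons]
          simp [hne]
        refine List.count_pos_iff.mp ?_
        omega
      have : x ≤ v := (List.pairwise_cons.mp hs).1 v hmem
      omega
    have hy : y = v := by
      by_contra hne
      have hcx : (x :: y :: t).count v = (y :: t).count v + 1 := by
        rw [List.count_cons]
        simp [hx]
      have hcy : (y :: t).count v = t.count v := by
        rw [List.count_cons]
        simp [hne]
      have hmem : v ∈ t := by
        refine List.count_pos_iff.mp ?_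
        omega
      have h1 : y ≤ v := (List.pairwise_cons.mp (List.pairwise_cons.mp hs).2).1 v hmem
      have h2 : v ≤ y := hp y (by simp)
      omega
    exact ⟨t, by rw [hx, hy]⟩

lemma exists_two (l : List ℕ) (h : 1 < l.length) : ∃ x y r, l = x :: y :: r := by
  match l with
  | [] => simp at h
  | [x] => simp at h
  | x :: y :: r => exact ⟨x, y, r, rfl⟩

lemma exists_three (l : List ℕ) (h : 2 < l.length) : ∃ x y z r, l = x :: y :: z :: r := by
  match l with
  | [] => simp at h
  | [x] => simp at h
  | [x, y] => simp at h
  | x :: y :: z :: r => exact ⟨x, y, z, r, rfl⟩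

lemma second_ge_two (s : List ℕ) (hs : s.Pairwise (· ≤ ·)) (hp : ∀ x ∈ s, 0 < x)
    (hc : s.count 1 ≤ 1) (h : 1 < s.length) : 2 ≤ s[1] := by
  obtain ⟨x, y, r, rfl⟩ := exists_two s h
  have hxy : x ≤ y := (List.pairwise_cons.mp hs).1 y (by simp)
  have hx : 0 < x := hp x (by simp)
  have hy : 0 < y := hp y (by simp)
  show 2 ≤ y
  by_contra hlt
  have hy1 : y = 1 := by omega
  have hx1 : x = 1 := by omega
  subst hx1; subst hy1
  simp [List.count_cons] at hc

lemma third_ge_three (s : List ℕ) (hs : s.Pairwise (· ≤ ·)) (hp : ∀ x ∈ s, 0 < x)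
    (hc : s.count 1 ≤ 1) (hS : SumCond3 1 s) (h : 2 < s.length) : 3 ≤ s[2] := by
  obtain ⟨x, y, z, r, rfl⟩ := exists_three s h
  have hxy : x ≤ y := (List.pairwise_cons.mp hs).1 y (by simp)
  have hxz : x ≤ z := (List.pairwise_cons.mp hs).1 z (by simp)
  have hyz : y ≤ z := (List.pairwise_cons.mp (List.pairwise_cons.mp hs).2).1 z (by simp)
  have hx : 0 < x := hp x (by simp)
  show 3 ≤ z
  by_contra hlt
  have hzx : z ≤ x + 1 := by omega
  have hmod := hS 0 (by simp) (by simpa using hzx)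
  simp at hmod
  have hnot : ¬(x = 1 ∧ y = 1) := by
    rintro ⟨rfl, rfl⟩
    simp [List.count_cons] at hc
  omega

lemma third_ge_two (s : List ℕ) (hs : s.Pairwise (· ≤ ·)) (hp : ∀ x ∈ s, 0 < x)
    (hS : SumCond3 1 s) (h : 2 < s.length) : 2 ≤ s[2] := by
  obtain ⟨x, y, z, r, rfl⟩ := exists_three s h
  have hxy : x ≤ y := (List.pairwise_cons.mp hs).1 y (by simp)
  have hyz : y ≤ z := (List.pairwise_cons.mp (List.pairwise_cons.mp hs).2).1 z (by simp)
  have hx : 0 < x := hp x (by simp)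
  show 2 ≤ z
  by_contra hlt
  have hzx : z ≤ x + 1 := by omega
  have hmod := hS 0 (by simp) (by simpa using hzx)
  simp at hmod
  omega

lemma sum_ge_length (l : List ℕ) (hp : ∀ x ∈ l, 0 < x) : l.length ≤ l.sum := by
  induction l with
  | nil => simp
  | cons x t ih =>
    have := hp x (by simp)
    have h2 := ih (fun y hy => hp y (by simp [hy]))
    simp
    omega

lemma sum_ge_three_mul (l : List ℕ) (hp : ∀ x ∈ l, 3 ≤ x) : 3 * l.length ≤ l.sum := by
  induction l with
  | nil => simp
  | cons x t ih =>
    have := hp x (by simp)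
    have h2 := ih (fun y hy => hp y (by simp [hy]))
    simp
    omega

end KR5

namespace KR5

lemma map_sub_add (l : List ℕ) (c : ℕ) (h : ∀ x ∈ l, c ≤ x) :
    (l.map (· - c)).map (· + c) = l := by
  rw [List.map_map]
  have h2 : ∀ x ∈ l, ((· + c) ∘ (· - c)) x = id x := by
    intro x hx
    simp only [Function.comp_apply, id_eq]
    have := h x hx
    omega
  rw [List.map_congr_left h2, List.map_id]

lemma SA_iff {l : List ℕ} {n m : ℕ} : l ∈ SA n m ↔ l ∈ SC n m ∧ l.count 1 ≤ 1 := by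
  constructor
  · rintro ⟨h1, h2, h3, h4, h5⟩; exact ⟨⟨h1, h2, h4, h5⟩, h3⟩
  · rintro ⟨⟨h1, h2, h4, h5⟩, h3⟩; exact ⟨h1, h2, h3, h4, h5⟩

lemma SE_iff {l : List ℕ} {n m : ℕ} :
    l ∈ SE n m ↔ l ∈ SC n m ∧ ∀ (_ : 1 < l.length), 3 ≤ l[1] := by
  constructor
  · rintro ⟨h1, h2, h3, h4, h5⟩; exact ⟨⟨h1, h2, h3, h4⟩, h5⟩
  · rintro ⟨⟨h1, h2, h3, h4⟩, h5⟩; exact ⟨h1, h2, h3, h4, h5⟩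

lemma mem_SC {l : List ℕ} {n m : ℕ} :
    l ∈ SC n m ↔ l.Pairwise (· ≤ ·) ∧ (∀ x ∈ l, 0 < x) ∧ l.sum = n ∧ l.length = m ∧
      DiffCond 3 3 l ∧ SumCond3 1 l := by
  constructor
  · rintro ⟨⟨h1, h2, h3⟩, h4, h5, h6⟩; exact ⟨h1, h2, h3, h4, h5, h6⟩
  · rintro ⟨h1, h2, h3, h4, h5, h6⟩; exact ⟨⟨h1, h2, h3⟩, h4, h5, h6⟩

/-- shifting a `SC`-partition up by `c`. -/
lemma up_SC {t : List ℕ} {n m : ℕ} (c : ℕ) (ht : t ∈ SC n m) :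
    t.map (· + c) ∈ SC (n + c * m) m := by
  obtain ⟨h1, h2, h3, h4, h5, h6⟩ := mem_SC.mp ht
  refine mem_SC.mpr ⟨?_, ?_, ?_, ?_, ?_, ?_⟩
  · exact (sorted_map_add t c).mpr h1
  · intro x hx
    obtain ⟨y, hy, rfl⟩ := List.mem_map.mp hx
    have := h2 y hy
    omega
  · rw [sum_map_add, h3, h4]
  · simpa using h4
  · exact (diffCond_map_add t c 3 3).mpr h5
  · exact (sumCond3_map_add t c).mpr h6

/-- shifting an `SC`-partition down by `c`, when all parts exceed `c`. -/
lemma down_SC {l : List ℕ} {n m : ℕ} (c : ℕ) (hl : l ∈ SC n m)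
    (hb : ∀ x ∈ l, c + 1 ≤ x) :
    l.map (· - c) ∈ SC (n - c * m) m ∧ (l.map (· - c)).map (· + c) = l := by
  obtain ⟨h1, h2, h3, h4, h5, h6⟩ := mem_SC.mp hl
  have heq : (l.map (· - c)).map (· + c) = l := map_sub_add l c (fun x hx => by
    have := hb x hx; omega)
  refine ⟨mem_SC.mpr ⟨?_, ?_, ?_, ?_, ?_, ?_⟩, heq⟩
  · rw [← sorted_map_add _ c, heq]; exact h1
  · intro x hx
    obtain ⟨y, hy, rfl⟩ := List.mem_map.mp hx
    have := hb y hy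
    omega
  · have := sum_map_add (l.map (· - c)) c
    rw [heq] at this
    have hlen : (l.map (· - c)).length = m := by simpa using h4
    rw [hlen] at this
    omega
  · simpa using h4
  · rw [← diffCond_map_add _ c 3 3, heq]; exact h5
  · rw [← sumCond3_map_add _ c, heq]; exact h6

lemma count_one_map_add (t : List ℕ) (c : ℕ) (hc : 0 < c) (hp : ∀ x ∈ t, 0 < x) :
    (t.map (· + c)).count 1 = 0 := by
  rw [List.count_eq_zero]
  intro hmem
  obtain ⟨y, hy0, hy⟩ := List.mem_map.mp hmem
  have := hp y hy0
  omega

lemma CAset (n m : ℕ) :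
    SA (n + (m + 1)) (m + 1) = u1 '' SC n (m + 1) ∪ cu1 '' SA n m := by
  ext l
  constructor
  · intro hl
    obtain ⟨hlC, hcount⟩ := SA_iff.mp hl
    obtain ⟨hsort, hpos, hsum, hlen, hD, hS⟩ := mem_SC.mp hlC
    by_cases h1 : (1 : ℕ) ∈ l
    · right
      obtain ⟨t, rfl⟩ := head_one l hsort hpos h1
      have hts : t.Pairwise (· ≤ ·) := (List.pairwise_cons.mp hsort).2
      have htp : ∀ x ∈ t, 0 < x := fun x hx => hpos x (by simp [hx])
      have htc : t.count 1 = 0 := by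
        have h2 : (1 :: t).count 1 = t.count 1 + 1 := by simp [List.count_cons]
        omega
      have ht2 : ∀ x ∈ t, 2 ≤ x := by
        intro x hx
        have h0 := htp x hx
        by_contra hh
        have hx1 : x = 1 := by omega
        subst hx1
        rw [List.count_eq_zero] at htc
        exact htc hx
      have htC : t ∈ SC (n + m) m := by
        refine mem_SC.mpr ⟨hts, htp, ?_, ?_, ?_, ?_⟩
        · simp at hsum; omega
        · simp at hlen; omega
        · exact ((diffCond_cons 1 t).mp hD).1
        · exact ((sumCond3_cons 1 t).mp hS).1
      obtain ⟨hsC, hst⟩ := down_SC 1 htC ht2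
      rw [show n + m - 1 * m = n by omega] at hsC
      refine ⟨t.map (· - 1), SA_iff.mpr ⟨hsC, ?_⟩, ?_⟩
      · -- count 1 of the shifted list ≤ 1
        by_contra hc
        push_neg at hc
        obtain ⟨hs', hp', _, _, _, _⟩ := mem_SC.mp hsC
        obtain ⟨r, hr⟩ := two_le_count (t.map (· - 1)) 1 hs'
          (fun x hx => hp' x hx) (by omega)
        have ht22 : t = 2 :: 2 :: (r.map (· + 1)) := by
          rw [← hst, hr]
          simp
        -- contradiction with SumCond3 of 1 :: t
        have hbd := ((sumCond3_cons 1 t).mp hS).2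
        rw [ht22] at hbd
        have hval := hbd (by simp) (by simp)
        simp only [List.getElem_cons_zero, List.getElem_cons_succ] at hval
        omega
      · rw [cu1, hst]
    · left
      have h2 : ∀ x ∈ l, 2 ≤ x := by
        intro x hx
        have h0 := hpos x hx
        by_contra hh
        have : x = 1 := by omega
        subst this
        exact h1 hx
      obtain ⟨hmC, hml⟩ := down_SC 1 hlC h2
      rw [show n + (m + 1) - 1 * (m + 1) = n by omega] at hmC
      exact ⟨l.map (· - 1), hmC, hml⟩
  · rintro (⟨t, htC, rfl⟩ | ⟨s, hsA, rfl⟩)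
    · have := up_SC 1 htC
      rw [show n + 1 * (m + 1) = n + (m + 1) by omega] at this
      obtain ⟨-, htp, -, -, -, -⟩ := mem_SC.mp htC
      exact SA_iff.mpr ⟨this, by rw [show u1 t = t.map (· + 1) from rfl,
        count_one_map_add t 1 (by omega) htp]; omega⟩
    · obtain ⟨hsC, hscount⟩ := SA_iff.mp hsA
      obtain ⟨hsort, hpos, hsum, hlen, hD, hS⟩ := mem_SC.mp hsC
      have hup := up_SC 1 hsC
      obtain ⟨husort, hupos, husum, hulen, huD, huS⟩ := mem_SC.mp hup
      refine SA_iff.mpr ⟨mem_SC.mpr ⟨?_, ?_, ?_, ?_, ?_, ?_⟩, ?_⟩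
      · rw [cu1, List.pairwise_cons]
        exact ⟨fun b hb => by
          obtain ⟨y, _, rfl⟩ := List.mem_map.mp hb; omega, husort⟩
      · rintro x hx
        rcases List.mem_cons.mp hx with rfl | hx2
        · omega
        · exact hupos x hx2
      · rw [cu1]
        simp only [List.sum_cons]
        rw [show (s.map (· + 1)).sum = n + 1 * m from husum]
        omega
      · rw [cu1]
        simp only [List.length_cons]
        rw [show (s.map (· + 1)).length = m from hulen]
      · rw [cu1, diffCond_cons]
        refine ⟨huD, ?_⟩
        intro hlen3
        have hlen3' : 2 < s.length := by simpa using hlen3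
        have h3 := third_ge_three s hsort hpos hscount hS hlen3'
        rw [List.getElem_map]
        omega
      · rw [cu1, sumCond3_cons]
        refine ⟨huS, ?_⟩
        intro hlen2 hle
        exfalso
        have hlen2' : 1 < s.length := by simpa using hlen2
        have h2 := second_ge_two s hsort hpos hscount hlen2'
        rw [List.getElem_map] at hle
        omega
      · rw [cu1, List.count_cons, count_one_map_add s 1 (by omega) hpos]
        simp

end KR5

namespace KR5

lemma sorted_getElem {l : List ℕ} (hs : l.Pairwise (· ≤ ·)) {i j : ℕ} (hij : i ≤ j)
    (hj : j < l.length) : l[i]'(by omega) ≤ l[j] := by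
  rcases Nat.eq_or_lt_of_le hij with rfl | hlt
  · exact le_refl _
  · exact List.pairwise_iff_getElem.mp hs i j (by omega) hj hlt

/-- prepending 1 to a shifted-up `SA`-partition gives an `SC`-partition. -/
lemma cu1_SC {s : List ℕ} {n m : ℕ} (hsA : s ∈ SA n m) :
    cu1 s ∈ SC (n + m + 1) (m + 1) ∧ (cu1 s).count 1 = 1 := by
  obtain ⟨hsC, hscount⟩ := SA_iff.mp hsA
  obtain ⟨hsort, hpos, hsum, hlen, hD, hS⟩ := mem_SC.mp hsC
  have hup := up_SC 1 hsC
  obtain ⟨husort, hupos, husum, hulen, huD, huS⟩ := mem_SC.mp hup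
  constructor
  · refine mem_SC.mpr ⟨?_, ?_, ?_, ?_, ?_, ?_⟩
    · rw [cu1, List.pairwise_cons]
      exact ⟨fun b hb => by
        obtain ⟨y, _, rfl⟩ := List.mem_map.mp hb; omega, husort⟩
    · rintro x hx
      rcases List.mem_cons.mp hx with rfl | hx2
      · omega
      · exact hupos x hx2
    · rw [cu1]
      simp only [List.sum_cons]
      rw [show (s.map (· + 1)).sum = n + 1 * m from husum]
      omega
    · rw [cu1]
      simp only [List.length_cons]
      rw [show (s.map (· + 1)).length = m from hulen]
    · rw [cu1, diffCond_cons]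
      refine ⟨huD, ?_⟩
      intro hlen3
      have hlen3' : 2 < s.length := by simpa using hlen3
      have h3 := third_ge_three s hsort hpos hscount hS hlen3'
      rw [List.getElem_map]
      omega
    · rw [cu1, sumCond3_cons]
      refine ⟨huS, ?_⟩
      intro hlen2 hle
      exfalso
      have hlen2' : 1 < s.length := by simpa using hlen2
      have h2 := second_ge_two s hsort hpos hscount hlen2'
      rw [List.getElem_map] at hle
      omega
  · rw [cu1, List.count_cons, count_one_map_add s 1 (by omega) hpos]
    simp

/-- peeling a leading 1 from an `SC`-partition with a single 1. -/
lemma peel_one {t : List ℕ} {N m : ℕ} (hl : (1 :: t) ∈ SC N (m + 1)) (ht1 : (1:ℕ) ∉ t) :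
    t.map (· - 1) ∈ SA (N - (m + 1)) m := by
  obtain ⟨hsort, hpos, hsum, hlen, hD, hS⟩ := mem_SC.mp hl
  have hts : t.Pairwise (· ≤ ·) := (List.pairwise_cons.mp hsort).2
  have htp : ∀ x ∈ t, 0 < x := fun x hx => hpos x (by simp [hx])
  have ht2 : ∀ x ∈ t, 2 ≤ x := by
    intro x hx
    have h0 := htp x hx
    by_contra hh
    have hx1 : x = 1 := by omega
    subst hx1
    exact ht1 hx
  have htC : t ∈ SC (N - 1) m := by
    refine mem_SC.mpr ⟨hts, htp, ?_, ?_, ?_, ?_⟩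
    · simp at hsum; omega
    · simp at hlen; omega
    · exact ((diffCond_cons 1 t).mp hD).1
    · exact ((sumCond3_cons 1 t).mp hS).1
  obtain ⟨hsC, hst⟩ := down_SC 1 htC ht2
  rw [show N - 1 - 1 * m = N - (m + 1) by omega] at hsC
  refine SA_iff.mpr ⟨hsC, ?_⟩
  by_contra hc
  push_neg at hc
  obtain ⟨hs', hp', _, _, _, _⟩ := mem_SC.mp hsC
  obtain ⟨r, hr⟩ := two_le_count (t.map (· - 1)) 1 hs' (fun x hx => hp' x hx) (by omega)
  have ht22 : t = 2 :: 2 :: (r.map (· + 1)) := by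
    rw [← hst, hr]
    simp
  have hbd := ((sumCond3_cons 1 t).mp hS).2
  rw [ht22] at hbd
  have hval := hbd (by simp) (by simp)
  simp only [List.getElem_cons_zero, List.getElem_cons_succ] at hval
  omega

lemma peel_one_eq {t : List ℕ} (ht2 : ∀ x ∈ t, 2 ≤ x) : cu1 (t.map (· - 1)) = 1 :: t := by
  rw [cu1, map_sub_add t 1 (fun x hx => by have := ht2 x hx; omega)]

lemma CBset (n m : ℕ) :
    SC (n + (m + 2)) (m + 2)
      = u1 '' SC n (m + 2) ∪ cu1 '' SA n (m + 1) ∪ ccu1 '' SE n m := by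
  ext l
  constructor
  · intro hlC
    obtain ⟨hsort, hpos, hsum, hlen, hD, hS⟩ := mem_SC.mp hlC
    by_cases h1 : (1 : ℕ) ∈ l
    · obtain ⟨t, rfl⟩ := head_one l hsort hpos h1
      by_cases h1t : (1 : ℕ) ∈ t
      · -- at least two ones
        right
        have hts : t.Pairwise (· ≤ ·) := (List.pairwise_cons.mp hsort).2
        have htp : ∀ x ∈ t, 0 < x := fun x hx => hpos x (by simp [hx])
        obtain ⟨r, rfl⟩ := head_one t hts htp h1t
        -- no third one
        have h1r : (1 : ℕ) ∉ r := by
          intro hmem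
          have hrs : r.Pairwise (· ≤ ·) := (List.pairwise_cons.mp hts).2
          have hrp : ∀ x ∈ r, 0 < x := fun x hx => htp x (by simp [hx])
          obtain ⟨r', rfl⟩ := head_one r hrs hrp hmem
          have := hS 0 (by simp) (by simp)
          simp at this
        have hrp : ∀ x ∈ r, 0 < x := fun x hx => htp x (by simp [hx])
        have hr2 : ∀ x ∈ r, 2 ≤ x := by
          intro x hx
          have h0 := hrp x hx
          by_contra hh
          have hx1 : x = 1 := by omega
          subst hx1
          exact h1r hx
        -- r is an SC-partition
        have hrs : r.Pairwise (· ≤ ·) := (List.pairwise_cons.mp hts).2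
        have hrC : r ∈ SC (n + m) m := by
          refine mem_SC.mpr ⟨hrs, hrp, ?_, ?_, ?_, ?_⟩
          · simp at hsum; omega
          · simp at hlen; omega
          · exact ((diffCond_cons 1 r).mp ((diffCond_cons 1 (1 :: r)).mp hD).1).1
          · exact ((sumCond3_cons 1 r).mp ((sumCond3_cons 1 (1 :: r)).mp hS).1).1
        obtain ⟨hsC, hsr⟩ := down_SC 1 hrC hr2
        rw [show n + m - 1 * m = n by omega] at hsC
        refine ⟨r.map (· - 1), SE_iff.mpr ⟨hsC, ?_⟩, ?_⟩
        · -- second entry of shifted list is ≥ 3, i.e. r[1] ≥ 4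
          intro hlen1
          have hlen1' : 1 < r.length := by simpa using hlen1
          have hbd := ((diffCond_cons 1 (1 :: r)).mp hD).2
          have h4 : 1 + 3 ≤ (1 :: r)[2]'(by simp; omega) := hbd (by simp; omega)
          simp only [List.getElem_cons_succ] at h4
          rw [List.getElem_map]
          omega
        · rw [ccu1, map_sub_add r 1 (fun x hx => by have := hr2 x hx; omega)]
      · -- exactly one 1
        left; right
        have ht1 : (1 : ℕ) ∉ t := h1t
        have hpeel := peel_one (N := n + (m + 2)) (m := m + 1) hlC ht1
        rw [show n + (m + 2) - (m + 1 + 1) = n by omega] at hpeel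
        have ht2 : ∀ x ∈ t, 2 ≤ x := by
          intro x hx
          have h0 : 0 < x := hpos x (by simp [hx])
          by_contra hh
          have hx1 : x = 1 := by omega
          subst hx1
          exact ht1 hx
        exact ⟨t.map (· - 1), hpeel, peel_one_eq ht2⟩
    · -- no ones
      left; left
      have h2 : ∀ x ∈ l, 2 ≤ x := by
        intro x hx
        have h0 := hpos x hx
        by_contra hh
        have : x = 1 := by omega
        subst this
        exact h1 hx
      obtain ⟨hmC, hml⟩ := down_SC 1 hlC h2
      rw [show n + (m + 2) - 1 * (m + 2) = n by omega] at hmC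
      exact ⟨l.map (· - 1), hmC, hml⟩
  · rintro ((⟨t, htC, rfl⟩ | ⟨s, hsA, rfl⟩) | ⟨s, hsE, rfl⟩)
    · have := up_SC 1 htC
      rw [show n + 1 * (m + 2) = n + (m + 2) by omega] at this
      exact this
    · have := (cu1_SC hsA).1
      rw [show n + (m + 1) + 1 = n + (m + 2) by omega] at this
      exact this
    · -- ccu1 image
      obtain ⟨hsC, hsE2⟩ := SE_iff.mp hsE
      obtain ⟨hsort, hpos, hsum, hlen, hD, hS⟩ := mem_SC.mp hsC
      have hup := up_SC 1 hsC
      obtain ⟨husort, hupos, husum, hulen, huD, huS⟩ := mem_SC.mp hup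
      refine mem_SC.mpr ⟨?_, ?_, ?_, ?_, ?_, ?_⟩
      · rw [ccu1, List.pairwise_cons]
        refine ⟨?_, ?_⟩
        · rintro b hb
          rcases List.mem_cons.mp hb with rfl | hb2
          · omega
          · obtain ⟨y, _, rfl⟩ := List.mem_map.mp hb2; omega
        · rw [List.pairwise_cons]
          exact ⟨fun b hb => by obtain ⟨y, _, rfl⟩ := List.mem_map.mp hb; omega, husort⟩
      · rintro x hx
        rcases List.mem_cons.mp hx with rfl | hx2
        · omega
        rcases List.mem_cons.mp hx2 with rfl | hx3
        · omega
        · exact hupos x hx3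
      · rw [ccu1]
        simp only [List.sum_cons]
        rw [show (s.map (· + 1)).sum = n + 1 * m from husum]
        omega
      · rw [ccu1]
        simp only [List.length_cons]
        rw [show (s.map (· + 1)).length = m from hulen]
      · rw [ccu1, diffCond_cons]
        constructor
        · rw [diffCond_cons]
          refine ⟨huD, ?_⟩
          intro hlen3
          have hlen3' : 2 < s.length := by simpa using hlen3
          have h1 : 3 ≤ s[1]'(by omega) := hsE2 (by omega)
          have h2 : s[1]'(by omega) ≤ s[2] := sorted_getElem hsort (by omega) hlen3'
          rw [List.getElem_map]
          omega
        · intro hlen3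
          have hlen2' : 1 < s.length := by simp at hlen3; omega
          have h1 : 3 ≤ s[1]'(by omega) := hsE2 hlen2'
          simp only [List.getElem_cons_succ, List.getElem_map]
          omega
      · rw [ccu1, sumCond3_cons]
        constructor
        · rw [sumCond3_cons]
          refine ⟨huS, ?_⟩
          intro hlen2 hle
          exfalso
          have hlen2' : 1 < s.length := by simpa using hlen2
          have h1 : 3 ≤ s[1]'(by omega) := hsE2 hlen2'
          rw [List.getElem_map] at hle
          omega
        · intro hlen2 hle
          have hlen0 : 0 < s.length := by simp at hlen2; omega
          simp only [List.getElem_cons_zero, List.getElem_cons_succ, List.getElem_map] at hle ⊢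
          have hp0 : 0 < s[0] := hpos _ (List.getElem_mem _)
          have hs0 : s[0] = 1 := by omega
          rw [hs0]

lemma CB1set (n : ℕ) : SC (n + 1) 1 = u1 '' SC n 1 ∪ cu1 '' SA n 0 := by
  ext l
  constructor
  · intro hlC
    obtain ⟨hsort, hpos, hsum, hlen, hD, hS⟩ := mem_SC.mp hlC
    by_cases h1 : (1 : ℕ) ∈ l
    · right
      obtain ⟨t, rfl⟩ := head_one l hsort hpos h1
      have ht0 : t = [] := by simpa using hlen
      subst ht0
      have hn : n = 0 := by simp at hsum; omega
      subst hn
      refine ⟨[], ?_, rfl⟩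
      exact ⟨⟨List.Pairwise.nil, by simp, rfl⟩, rfl, by simp, fun j h => by simp at h,
        fun j h => by simp at h⟩
    · left
      have h2 : ∀ x ∈ l, 2 ≤ x := by
        intro x hx
        have h0 := hpos x hx
        by_contra hh
        have : x = 1 := by omega
        subst this
        exact h1 hx
      obtain ⟨hmC, hml⟩ := down_SC 1 hlC h2
      rw [show n + 1 - 1 * 1 = n by omega] at hmC
      exact ⟨l.map (· - 1), hmC, hml⟩
  · rintro (⟨t, htC, rfl⟩ | ⟨s, hsA, rfl⟩)
    · have := up_SC 1 htC
      rw [show n + 1 * 1 = n + 1 by omega] at this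
      exact this
    · have := (cu1_SC hsA).1
      rw [show n + 0 + 1 = n + 1 by omega] at this
      exact this

lemma CCset (n m : ℕ) :
    SE (n + (2 * m + 1)) (m + 1) = u1 '' SA (n + m) (m + 1) ∪ cu2 '' SC n m := by
  ext l
  constructor
  · intro hlE
    obtain ⟨hlC, hE2⟩ := SE_iff.mp hlE
    obtain ⟨hsort, hpos, hsum, hlen, hD, hS⟩ := mem_SC.mp hlC
    by_cases h1 : (1 : ℕ) ∈ l
    · right
      obtain ⟨t, rfl⟩ := head_one l hsort hpos h1
      have hts : t.Pairwise (· ≤ ·) := (List.pairwise_cons.mp hsort).2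
      have htp : ∀ x ∈ t, 0 < x := fun x hx => hpos x (by simp [hx])
      have ht3 : ∀ x ∈ t, 3 ≤ x := by
        intro x hx
        match t, hx with
        | y :: r, hx =>
          have hy3 : 3 ≤ y := by
            have := hE2 (by simp)
            simpa using this
          rcases List.mem_cons.mp hx with rfl | hx2
          · exact hy3
          · have := (List.pairwise_cons.mp hts).1 x hx2
            omega
      have htC : t ∈ SC (n + 2 * m) m := by
        refine mem_SC.mpr ⟨hts, htp, ?_, ?_, ?_, ?_⟩
        · simp at hsum; omega
        · simp at hlen; omega
        · exact ((diffCond_cons 1 t).mp hD).1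
        · exact ((sumCond3_cons 1 t).mp hS).1
      obtain ⟨hsC, hst⟩ := down_SC 2 htC (fun x hx => by have := ht3 x hx; omega)
      rw [show n + 2 * m - 2 * m = n by omega] at hsC
      exact ⟨t.map (· - 2), hsC, by rw [cu2, hst]⟩
    · left
      have h2 : ∀ x ∈ l, 2 ≤ x := by
        intro x hx
        have h0 := hpos x hx
        by_contra hh
        have : x = 1 := by omega
        subst this
        exact h1 hx
      obtain ⟨hmC, hml⟩ := down_SC 1 hlC h2
      rw [show n + (2 * m + 1) - 1 * (m + 1) = n + m by omega] at hmC
      refine ⟨l.map (· - 1), SA_iff.mpr ⟨hmC, ?_⟩, hml⟩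
      -- count of 1s in shifted list ≤ 1
      by_contra hc
      push_neg at hc
      obtain ⟨hs', hp', _, _, _, _⟩ := mem_SC.mp hmC
      obtain ⟨r, hr⟩ := two_le_count (l.map (· - 1)) 1 hs' (fun x hx => hp' x hx) (by omega)
      have hl22 : l = 2 :: 2 :: (r.map (· + 1)) := by
        rw [← hml, hr]
        simp
      subst hl22
      have h3 := hE2 (by simp)
      simp at h3
  · rintro (⟨s, hsA, rfl⟩ | ⟨s, hsC, rfl⟩)
    · obtain ⟨hsC, hscount⟩ := SA_iff.mp hsA
      obtain ⟨hsort, hpos, hsum, hlen, hD, hS⟩ := mem_SC.mp hsC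
      have hup := up_SC 1 hsC
      rw [show n + m + 1 * (m + 1) = n + (2 * m + 1) by omega] at hup
      refine SE_iff.mpr ⟨hup, ?_⟩
      intro hlen1
      have hlen1' : 1 < s.length := by simpa [u1] using hlen1
      have h2 := second_ge_two s hsort hpos hscount hlen1'
      simp only [u1, List.getElem_map]
      omega
    · obtain ⟨hsort, hpos, hsum, hlen, hD, hS⟩ := mem_SC.mp hsC
      have hup := up_SC 2 hsC
      obtain ⟨husort, hupos, husum, hulen, huD, huS⟩ := mem_SC.mp hup
      refine SE_iff.mpr ⟨mem_SC.mpr ⟨?_, ?_, ?_, ?_, ?_, ?_⟩, ?_⟩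
      · rw [cu2, List.pairwise_cons]
        exact ⟨fun b hb => by obtain ⟨y, _, rfl⟩ := List.mem_map.mp hb; omega, husort⟩
      · rintro x hx
        rcases List.mem_cons.mp hx with rfl | hx2
        · omega
        · exact hupos x hx2
      · rw [cu2]
        simp only [List.sum_cons]
        rw [show (s.map (· + 2)).sum = n + 2 * m from husum]
        omega
      · rw [cu2]
        simp only [List.length_cons]
        rw [show (s.map (· + 2)).length = m from hulen]
      · rw [cu2, diffCond_cons]
        refine ⟨huD, ?_⟩
        intro hlen3
        have hlen3' : 2 < s.length := by simpa using hlen3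
        have h2 := third_ge_two s hsort hpos hS hlen3'
        rw [List.getElem_map]
        omega
      · rw [cu2, sumCond3_cons]
        refine ⟨huS, ?_⟩
        intro hlen2 hle
        exfalso
        have hlen2' : 1 < s.length := by simpa using hlen2
        rw [List.getElem_map] at hle
        have hp1 : 0 < s[1] := hpos _ (List.getElem_mem _)
        omega
      · intro hlen1
        have hlen0 : 0 < s.length := by simp [cu2] at hlen1; omega
        simp only [cu2, List.getElem_cons_succ, List.getElem_map]
        have hp0 : 0 < s[0] := hpos _ (List.getElem_mem _)
        omega

end KR5

namespace KR5

lemma finite_pos_sum (n : ℕ) : {l : List ℕ | (∀ x ∈ l, 0 < x) ∧ l.sum = n}.Finite := by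
  induction n using Nat.strong_induction_on with
  | _ n ih =>
    rcases Nat.eq_zero_or_pos n with rfl | hn
    · apply Set.Finite.subset (Set.finite_singleton ([] : List ℕ))
      rintro l ⟨hp, hsum⟩
      cases l with
      | nil => simp
      | cons x t =>
        have := hp x (by simp)
        simp at hsum
        omega
    · apply Set.Finite.subset
        (Set.Finite.biUnion (Finset.finite_toSet (Finset.Icc 1 n)) (fun x hx =>
          Set.Finite.image (fun t => x :: t)
            (ih (n - x) (by
              simp only [Finset.coe_Icc, Set.mem_Icc] at hx
              omega))))
      rintro l ⟨hp, hsum⟩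
      cases l with
      | nil => simp at hsum; omega
      | cons x t =>
        have hx1 : 0 < x := hp x (by simp)
        have hsum' : x + t.sum = n := by simpa using hsum
        have hmem : x ∈ ((Finset.Icc 1 n : Finset ℕ) : Set ℕ) := by
          simp only [Finset.mem_coe, Finset.mem_Icc]
          omega
        exact Set.mem_biUnion hmem ⟨t, ⟨fun y hy => hp y (by simp [hy]), by omega⟩, rfl⟩

lemma finite_SC (n m : ℕ) : (SC n m).Finite := by
  apply Set.Finite.subset (finite_pos_sum n)
  rintro l hl
  obtain ⟨hs, hp, hsum, hlen, hD, hS⟩ := mem_SC.mp hl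
  exact ⟨hp, hsum⟩

lemma finite_SA (n m : ℕ) : (SA n m).Finite :=
  Set.Finite.subset (finite_SC n m) (fun l hl => (SA_iff.mp hl).1)

lemma finite_SE (n m : ℕ) : (SE n m).Finite :=
  Set.Finite.subset (finite_SC n m) (fun l hl => (SE_iff.mp hl).1)

noncomputable def aN (n m : ℕ) : ℕ := (SA n m).ncard
noncomputable def cN (n m : ℕ) : ℕ := (SC n m).ncard
noncomputable def eN (n m : ℕ) : ℕ := (SE n m).ncard

lemma u1_left_inv (l : List ℕ) : (u1 l).map (· - 1) = l := by
  rw [u1, List.map_map]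
  have : ∀ x ∈ l, ((· - 1) ∘ (· + 1)) x = id x := fun x _ => by
    simp
  rw [List.map_congr_left this, List.map_id]

lemma u1_inj : Function.Injective u1 := fun a b h => by
  have := congrArg (List.map (· - 1)) h
  rwa [u1_left_inv, u1_left_inv] at this

lemma cu1_inj : Function.Injective cu1 := fun a b h => by
  rw [cu1, cu1] at h
  simp only [List.cons.injEq, true_and] at h
  exact u1_inj h

lemma u2_left_inv (l : List ℕ) : (l.map (· + 2)).map (· - 2) = l := by
  rw [List.map_map]
  have : ∀ x ∈ l, ((· - 2) ∘ (· + 2)) x = id x := fun x _ => by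
    simp
  rw [List.map_congr_left this, List.map_id]

lemma ccu1_inj : Function.Injective ccu1 := fun a b h => by
  rw [ccu1, ccu1] at h
  simp only [List.cons.injEq, true_and] at h
  exact u1_inj h

lemma cu2_inj : Function.Injective cu2 := fun a b h => by
  rw [cu2, cu2] at h
  simp only [List.cons.injEq, true_and] at h
  have := congrArg (List.map (· - 2)) h
  rwa [u2_left_inv, u2_left_inv] at this

lemma one_not_mem_u1 {t : List ℕ} (hp : ∀ x ∈ t, 0 < x) : (1 : ℕ) ∉ u1 t := by
  intro hmem
  obtain ⟨y, hy0, hy⟩ := List.mem_map.mp hmem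
  have := hp y hy0
  omega

lemma count_u1_img {n m : ℕ} {l : List ℕ} (h : l ∈ u1 '' SC n m) : l.count 1 = 0 := by
  obtain ⟨t, htC, rfl⟩ := h
  obtain ⟨-, hp, -, -, -, -⟩ := mem_SC.mp htC
  exact count_one_map_add t 1 (by omega) hp

lemma count_cu1_img {n m : ℕ} {l : List ℕ} (h : l ∈ cu1 '' SA n m) : l.count 1 = 1 := by
  obtain ⟨t, htA, rfl⟩ := h
  exact (cu1_SC htA).2

lemma count_ccu1_img {n m : ℕ} {l : List ℕ} (h : l ∈ ccu1 '' SE n m) : l.count 1 = 2 := by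
  obtain ⟨t, htE, rfl⟩ := h
  obtain ⟨htC, -⟩ := SE_iff.mp htE
  obtain ⟨-, hp, -, -, -, -⟩ := mem_SC.mp htC
  rw [ccu1, List.count_cons, List.count_cons, count_one_map_add t 1 (by omega) hp]
  simp

lemma count_cu2_img {n m : ℕ} {l : List ℕ} (h : l ∈ cu2 '' SC n m) : l.count 1 = 1 := by
  obtain ⟨t, htC, rfl⟩ := h
  obtain ⟨-, hp, -, -, -, -⟩ := mem_SC.mp htC
  have : (t.map (· + 2)).count 1 = 0 := by
    rw [List.count_eq_zero]
    intro hmem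
    obtain ⟨y, hy0, hy⟩ := List.mem_map.mp hmem
    have := hp y hy0
    omega
  rw [cu2, List.count_cons, this]
  simp

lemma CAcount (n m : ℕ) : aN (n + (m + 1)) (m + 1) = cN n (m + 1) + aN n m := by
  have hd : Disjoint (u1 '' SC n (m + 1)) (cu1 '' SA n m) := by
    rw [Set.disjoint_left]
    intro l h1 h2
    have := count_u1_img h1
    have := count_cu1_img h2
    omega
  have hf1 : (u1 '' SC n (m + 1)).Finite := Set.Finite.image _ (finite_SC n (m + 1))
  have hf2 : (cu1 '' SA n m).Finite := Set.Finite.image _ (finite_SA n m)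
  rw [aN, CAset, Set.ncard_union_eq hd hf1 hf2,
    Set.ncard_image_of_injective _ u1_inj, Set.ncard_image_of_injective _ cu1_inj]
  rfl

lemma CBcount (n m : ℕ) :
    cN (n + (m + 2)) (m + 2) = cN n (m + 2) + aN n (m + 1) + eN n m := by
  have hf1 : (u1 '' SC n (m + 2)).Finite := Set.Finite.image _ (finite_SC n (m + 2))
  have hf2 : (cu1 '' SA n (m + 1)).Finite := Set.Finite.image _ (finite_SA n (m + 1))
  have hf3 : (ccu1 '' SE n m).Finite := Set.Finite.image _ (finite_SE n m)
  have hd12 : Disjoint (u1 '' SC n (m + 2)) (cu1 '' SA n (m + 1)) := by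
    rw [Set.disjoint_left]
    intro l h1 h2
    have := count_u1_img h1
    have := count_cu1_img h2
    omega
  have hd3 : Disjoint (u1 '' SC n (m + 2) ∪ cu1 '' SA n (m + 1)) (ccu1 '' SE n m) := by
    rw [Set.disjoint_left]
    intro l h1 h2
    have h3 := count_ccu1_img h2
    rcases h1 with h1 | h1
    · have := count_u1_img h1; omega
    · have := count_cu1_img h1; omega
  rw [cN, CBset, Set.ncard_union_eq hd3 (Set.Finite.union hf1 hf2) hf3,
    Set.ncard_union_eq hd12 hf1 hf2,
    Set.ncard_image_of_injective _ u1_inj, Set.ncard_image_of_injective _ cu1_inj,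
    Set.ncard_image_of_injective _ ccu1_inj]
  rfl

lemma CB1count (n : ℕ) : cN (n + 1) 1 = cN n 1 + aN n 0 := by
  have hd : Disjoint (u1 '' SC n 1) (cu1 '' SA n 0) := by
    rw [Set.disjoint_left]
    intro l h1 h2
    have := count_u1_img h1
    have := count_cu1_img h2
    omega
  rw [cN, CB1set, Set.ncard_union_eq hd (Set.Finite.image _ (finite_SC n 1))
      (Set.Finite.image _ (finite_SA n 0)),
    Set.ncard_image_of_injective _ u1_inj, Set.ncard_image_of_injective _ cu1_inj]
  rfl

lemma CCcount (n m : ℕ) :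
    eN (n + (2 * m + 1)) (m + 1) = aN (n + m) (m + 1) + cN n m := by
  have hd : Disjoint (u1 '' SA (n + m) (m + 1)) (cu2 '' SC n m) := by
    rw [Set.disjoint_left]
    intro l h1 h2
    have h3 : l.count 1 = 0 := by
      obtain ⟨t, htA, rfl⟩ := h1
      obtain ⟨htC, -⟩ := SA_iff.mp htA
      exact count_u1_img ⟨t, htC, rfl⟩
    have := count_cu2_img h2
    omega
  rw [eN, CCset, Set.ncard_union_eq hd (Set.Finite.image _ (finite_SA (n + m) (m + 1)))
      (Set.Finite.image _ (finite_SC n m)),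
    Set.ncard_image_of_injective _ u1_inj, Set.ncard_image_of_injective _ cu2_inj]
  rfl

lemma aN_zero {n m : ℕ} (h : n < m) : aN n m = 0 := by
  rw [aN]
  convert Set.ncard_empty (List ℕ)
  rw [Set.eq_empty_iff_forall_notMem]
  intro l hl
  obtain ⟨hlC, -⟩ := SA_iff.mp hl
  obtain ⟨-, hp, hsum, hlen, -, -⟩ := mem_SC.mp hlC
  have := sum_ge_length l hp
  omega

lemma cN_zero {n m : ℕ} (h : n < m) : cN n m = 0 := by
  rw [cN]
  convert Set.ncard_empty (List ℕ)
  rw [Set.eq_empty_iff_forall_notMem]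
  intro l hl
  obtain ⟨-, hp, hsum, hlen, -, -⟩ := mem_SC.mp hl
  have := sum_ge_length l hp
  omega

lemma eN_zero {n m : ℕ} (h : n < 2 * m + 1) : eN n (m + 1) = 0 := by
  rw [eN]
  convert Set.ncard_empty (List ℕ)
  rw [Set.eq_empty_iff_forall_notMem]
  intro l hl
  obtain ⟨hlC, hE2⟩ := SE_iff.mp hl
  obtain ⟨hsort, hp, hsum, hlen, -, -⟩ := mem_SC.mp hlC
  match l, hlen with
  | x :: t, hlen =>
    have hx : 0 < x := hp x (by simp)
    have ht3 : ∀ y ∈ t, 3 ≤ y := by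
      intro y hy
      match t, hy with
      | z :: r, hy =>
        have hz3 : 3 ≤ z := by
          have := hE2 (by simp)
          simpa using this
        rcases List.mem_cons.mp hy with rfl | hy2
        · exact hz3
        · have hts : (z :: r).Pairwise (· ≤ ·) := (List.pairwise_cons.mp hsort).2
          have := (List.pairwise_cons.mp hts).1 y hy2
          omega
    have := sum_ge_three_mul t ht3
    have hlt : t.length = m := by simpa using hlen
    simp at hsum
    omega

lemma SA_nil (n : ℕ) : aN n 0 = if n = 0 then 1 else 0 := by
  rw [aN]
  rcases eq_or_ne n 0 with rfl | hn
  · rw [if_pos rfl]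
    convert Set.ncard_singleton ([] : List ℕ)
    rw [Set.eq_singleton_iff_unique_mem]
    constructor
    · exact ⟨⟨List.Pairwise.nil, by simp, rfl⟩, rfl, by simp, fun j h => by simp at h,
        fun j h => by simp at h⟩
    · rintro l ⟨⟨-, -, hsum⟩, hlen, -⟩
      exact List.eq_nil_of_length_eq_zero hlen
  · rw [if_neg hn]
    convert Set.ncard_empty (List ℕ)
    rw [Set.eq_empty_iff_forall_notMem]
    rintro l ⟨⟨-, -, hsum⟩, hlen, -⟩
    have : l = [] := List.eq_nil_of_length_eq_zero hlen
    subst this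
    simp at hsum
    exact hn hsum.symm

lemma SC_nil (n : ℕ) : cN n 0 = if n = 0 then 1 else 0 := by
  rw [cN]
  rcases eq_or_ne n 0 with rfl | hn
  · rw [if_pos rfl]
    convert Set.ncard_singleton ([] : List ℕ)
    rw [Set.eq_singleton_iff_unique_mem]
    constructor
    · exact ⟨⟨List.Pairwise.nil, by simp, rfl⟩, rfl, fun j h => by simp at h,
        fun j h => by simp at h⟩
    · rintro l ⟨-, hlen, -⟩
      exact List.eq_nil_of_length_eq_zero hlen
  · rw [if_neg hn]
    convert Set.ncard_empty (List ℕ)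
    rw [Set.eq_empty_iff_forall_notMem]
    rintro l ⟨⟨-, -, hsum⟩, hlen, -⟩
    have : l = [] := List.eq_nil_of_length_eq_zero hlen
    subst this
    simp at hsum
    exact hn hsum.symm

lemma SE_nil (n : ℕ) : eN n 0 = if n = 0 then 1 else 0 := by
  rw [eN]
  rcases eq_or_ne n 0 with rfl | hn
  · rw [if_pos rfl]
    convert Set.ncard_singleton ([] : List ℕ)
    rw [Set.eq_singleton_iff_unique_mem]
    constructor
    · exact ⟨⟨List.Pairwise.nil, by simp, rfl⟩, rfl, fun j h => by simp at h,
        fun j h => by simp at h, fun h => by simp at h⟩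
    · rintro l ⟨-, hlen, -⟩
      exact List.eq_nil_of_length_eq_zero hlen
  · rw [if_neg hn]
    convert Set.ncard_empty (List ℕ)
    rw [Set.eq_empty_iff_forall_notMem]
    rintro l ⟨⟨-, -, hsum⟩, hlen, -⟩
    have : l = [] := List.eq_nil_of_length_eq_zero hlen
    subst this
    simp at hsum
    exact hn hsum.symm

end KR5

namespace KR5

noncomputable def Ac (m : ℕ) : PowerSeries ℚ := PowerSeries.mk fun n => (aN n m : ℚ)
noncomputable def Cc (m : ℕ) : PowerSeries ℚ := PowerSeries.mk fun n => (cN n m : ℚ)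
noncomputable def Ecs (m : ℕ) : PowerSeries ℚ := PowerSeries.mk fun n => (eN n m : ℚ)

lemma serA (m : ℕ) : Ac (m + 1) = X ^ (m + 1) * Cc (m + 1) + X ^ (m + 1) * Ac m := by
  ext n
  rw [map_add, PowerSeries.coeff_X_pow_mul', PowerSeries.coeff_X_pow_mul']
  simp only [Ac, Cc, PowerSeries.coeff_mk]
  split_ifs with h
  · have h2 := CAcount (n - (m + 1)) m
    rw [Nat.sub_add_cancel h] at h2
    rw [h2]
    push_cast
    ring
  · have hz : aN n (m + 1) = 0 := aN_zero (by omega)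
    rw [hz]
    simp

lemma serB (m : ℕ) : Cc (m + 2)
    = X ^ (m + 2) * Cc (m + 2) + X ^ (m + 2) * Ac (m + 1) + X ^ (m + 2) * Ecs m := by
  ext n
  rw [map_add, map_add, PowerSeries.coeff_X_pow_mul', PowerSeries.coeff_X_pow_mul',
    PowerSeries.coeff_X_pow_mul']
  simp only [Ac, Cc, Ecs, PowerSeries.coeff_mk]
  split_ifs with h
  · have h2 := CBcount (n - (m + 2)) m
    rw [Nat.sub_add_cancel h] at h2
    rw [h2]
    push_cast
    ring
  · have hz : cN n (m + 2) = 0 := cN_zero (by omega)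
    rw [hz]
    simp

lemma serB1 : Cc 1 = X ^ 1 * Cc 1 + X ^ 1 * Ac 0 := by
  ext n
  rw [map_add, PowerSeries.coeff_X_pow_mul', PowerSeries.coeff_X_pow_mul']
  simp only [Ac, Cc, PowerSeries.coeff_mk]
  split_ifs with h
  · have h2 := CB1count (n - 1)
    rw [Nat.sub_add_cancel h] at h2
    rw [h2]
    push_cast
    ring
  · have hz : cN n 1 = 0 := cN_zero (by omega)
    rw [hz]
    simp

lemma serC (m : ℕ) : Ecs (m + 1) = X ^ (m + 1) * Ac (m + 1) + X ^ (2 * m + 1) * Cc m := by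
  ext n
  rw [map_add, PowerSeries.coeff_X_pow_mul', PowerSeries.coeff_X_pow_mul']
  simp only [Ac, Cc, Ecs, PowerSeries.coeff_mk]
  by_cases h2 : 2 * m + 1 ≤ n
  · have h1 : m + 1 ≤ n := by omega
    rw [if_pos h1, if_pos h2]
    have h3 := CCcount (n - (2 * m + 1)) m
    rw [Nat.sub_add_cancel h2, show n - (2 * m + 1) + m = n - (m + 1) by omega] at h3
    rw [h3]
    push_cast
    ring
  · have hL : eN n (m + 1) = 0 := eN_zero (by omega)
    rw [hL, if_neg h2]
    by_cases h1 : m + 1 ≤ n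
    · rw [if_pos h1]
      have : aN (n - (m + 1)) (m + 1) = 0 := aN_zero (by omega)
      rw [this]
      simp
    · rw [if_neg h1]
      simp

lemma Ac0 : Ac 0 = 1 := by
  ext n
  rw [Ac, PowerSeries.coeff_mk, PowerSeries.coeff_one, SA_nil]
  split_ifs <;> simp

lemma Ecs0 : Ecs 0 = 1 := by
  ext n
  rw [Ecs, PowerSeries.coeff_mk, PowerSeries.coeff_one, SE_nil]
  split_ifs <;> simp

lemma Cc0 : Cc 0 = Ac 0 := by
  ext n
  rw [Cc, Ac, PowerSeries.coeff_mk, PowerSeries.coeff_mk, SC_nil, SA_nil]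

lemma combI1 : (1 - (X : PowerSeries ℚ)) * Ac 1 = X * Ac 0 := by
  linear_combination (1 - (X : PowerSeries ℚ)) * serA 0 + (X : PowerSeries ℚ) * serB1

lemma combIG (m : ℕ) : (1 - (X : PowerSeries ℚ) ^ (m + 2)) * Ac (m + 2)
    = X ^ (m + 2) * Ac (m + 1) + X ^ (2 * m + 4) * Ecs m := by
  linear_combination (1 - (X : PowerSeries ℚ) ^ (m + 2)) * serA (m + 1)
    + (X : PowerSeries ℚ) ^ (m + 2) * serB m

lemma combII1 : Ecs 1 = X * Ac 1 + X * Ac 0 := by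
  linear_combination serC 0 + (X : PowerSeries ℚ) ^ 1 * Cc0

lemma combIIG (m : ℕ) : Ecs (m + 2)
    = X ^ (m + 2) * Ac (m + 2) + X ^ (m + 2) * Ac (m + 1) - X ^ (2 * m + 3) * Ac m := by
  linear_combination serC (m + 1) - (X : PowerSeries ℚ) ^ (m + 2) * serA m

lemma IhatAll (K : ℕ) : (1 - (X : PowerSeries ℚ) ^ (K + 2)) * Rs (K + 2)
    = X ^ (K + 2) * Rs (K + 1) + X ^ (2 * K + 4) * Es K := by
  match K with
  | 0 => simpa using Ihat2
  | (J + 1) =>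
    have h := IhatGen J
    rw [show 2 * (J + 1) + 4 = 2 * J + 6 by ring]
    exact h

lemma one_sub_X_pow_ne {k : ℕ} (hk : k ≠ 0) : (1 - (X : PowerSeries ℚ) ^ k) ≠ 0 :=
  fun h => one_sub_X_pow_cc hk (by rw [h]; simp)

lemma AR : ∀ L, Ac L = Rs L ∧ Ecs L = Es L := by
  intro L
  induction L using Nat.strong_induction_on with
  | _ L ih =>
    match L with
    | 0 => exact ⟨by rw [Ac0, Rs_zero], by rw [Ecs0, Es_zero]⟩
    | 1 =>
      have hA : Ac 1 = Rs 1 := by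
        apply mul_left_cancel₀ (one_sub_X_pow_ne (k := 1) (by omega))
        rw [pow_one]
        rw [combI1, Ihat1, Ac0, Rs_zero]
      have hE : Ecs 1 = Es 1 := by
        have hA0 : Ac 0 = Rs 0 := by rw [Ac0, Rs_zero]
        linear_combination combII1 + (X : PowerSeries ℚ) * hA
          + (X : PowerSeries ℚ) * hA0 - Ihat1 - Es_one
      exact ⟨hA, hE⟩
    | (K + 2) =>
      have ih1 := ih (K + 1) (by omega)
      have ih0 := ih K (by omega)
      have hA : Ac (K + 2) = Rs (K + 2) := by
        apply mul_left_cancel₀ (one_sub_X_pow_ne (k := K + 2) (by omega))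
        rw [combIG K, IhatAll K, ih1.1, ih0.2]
      have hE : Ecs (K + 2) = Es (K + 2) := by
        have h1 := E1Gen K
        have h2 := IhatAll K
        have h3 := combIIG K
        linear_combination h3 + (X : PowerSeries ℚ) ^ (K + 2) * hA
          + (X : PowerSeries ℚ) ^ (K + 2) * ih1.1
          - (X : PowerSeries ℚ) ^ (2 * K + 3) * ih0.1 - h1 - h2
      exact ⟨hA, hE⟩

end KR5


/-- Theorem 4.1: the generating function for `kr₅`, coefficient of `q^n x^m`;
`p = (n₁, n₂, n₃)`. -/
theorem kr5_generating_function (n m : ℕ) :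
    (kr5 n m : ℚ) =
      ∑ p ∈ (Finset.range (m + 1) ×ˢ Finset.range (m + 1) ×ˢ Finset.range (m + 1)).filter
          (fun p => p.1 + 2 * p.2.1 + 3 * p.2.2 = m),
        PowerSeries.coeff n
          ((X : PowerSeries ℚ) ^
              ((9 * p.2.2 ^ 2 + 5 * p.2.2) / 2 + 2 * p.2.1 ^ 2 + p.2.1 + p.1 ^ 2 +
                6 * p.2.2 * p.2.1 + 3 * p.2.2 * p.1 + 2 * p.2.1 * p.1) *
            nqodd p.2.1 * (qq p.1 * qsq p.2.1 * qcube p.2.2)⁻¹) := by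
  have h0 : kr5 n m = KR5.aN n m := rfl
  have h1 : (kr5 n m : ℚ) = PowerSeries.coeff n (KR5.Ac m) := by
    rw [h0, KR5.Ac, PowerSeries.coeff_mk]
  rw [h1, (KR5.AR m).1, KR5.Rs, map_sum]
  rfl
end

section
/- As formal power series, ∑_{n≥0} q^{n²} (−q;q²)_n x^n / (q²;q²)_n = ∑_{n_1,n_2≥0} q^{4n_2² + (3n_1² − n_1)/2 + 4n_2 n_1} x^{2n_2 + n_1} / ((q;q)_{n_1} (q⁴;q⁴)_{n_2}). -/
open Finset PowerSeries

noncomputable def Tt (a b : ℕ) : PowerSeries ℚ :=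
  (X : PowerSeries ℚ) ^ (4 * b ^ 2 + (3 * a ^ 2 - a) / 2 + 4 * b * a) * (qq a * qfour b)⁻¹

lemma gg_cc_one_sub (k : ℕ) (hk : 0 < k) :
    constantCoeff (R := ℚ) (1 - (X : PowerSeries ℚ) ^ k) = 1 := by
  simp [map_sub, map_pow, constantCoeff_X, zero_pow hk.ne']

lemma gg_cc_qq (n : ℕ) : constantCoeff (R := ℚ) (qq n) = 1 := by
  rw [qq, map_prod]
  apply Finset.prod_eq_one
  intro j _
  exact gg_cc_one_sub _ (by omega)

lemma gg_cc_qsq (n : ℕ) : constantCoeff (R := ℚ) (qsq n) = 1 := by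
  rw [qsq, map_prod]
  apply Finset.prod_eq_one
  intro j _
  exact gg_cc_one_sub _ (by omega)

lemma gg_cc_qfour (n : ℕ) : constantCoeff (R := ℚ) (qfour n) = 1 := by
  rw [qfour, map_prod]
  apply Finset.prod_eq_one
  intro j _
  exact gg_cc_one_sub _ (by omega)

lemma gg_ne_zero {f : PowerSeries ℚ} (h : constantCoeff (R := ℚ) f = 1) : f ≠ 0 := by
  intro h0
  rw [h0, map_zero] at h
  exact zero_ne_one h

lemma gg_inv_cancel (f g : PowerSeries ℚ) (h : constantCoeff (R := ℚ) g = 1) :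
    (f * g)⁻¹ * g = f⁻¹ := by
  rw [PowerSeries.mul_inv_rev, mul_comm g⁻¹ f⁻¹, mul_assoc,
    PowerSeries.inv_mul_cancel g (by rw [h]; norm_num), mul_one]

lemma gg_even3 (a : ℕ) : ∃ k, 3 * a ^ 2 - a = 2 * k := by
  induction a with
  | zero => exact ⟨0, rfl⟩
  | succ a ih =>
    obtain ⟨k, hk⟩ := ih
    have p1 : 3 * (a + 1) ^ 2 = 3 * a ^ 2 + (6 * a + 3) := by ring
    have p2 : a ≤ 3 * a ^ 2 := by nlinarith
    exact ⟨k + 3 * a + 1, by omega⟩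

lemma gg_ee_succ_a (a b : ℕ) :
    4 * b ^ 2 + (3 * (a + 1) ^ 2 - (a + 1)) / 2 + 4 * b * (a + 1)
      = (4 * b ^ 2 + (3 * a ^ 2 - a) / 2 + 4 * b * a) + (3 * a + 1 + 4 * b) := by
  obtain ⟨k, hk⟩ := gg_even3 a
  have p1 : 3 * (a + 1) ^ 2 = 3 * a ^ 2 + (6 * a + 3) := by ring
  have p2 : a ≤ 3 * a ^ 2 := by nlinarith
  have p4 : 4 * b * (a + 1) = 4 * b * a + 4 * b := by ring
  omega

lemma gg_ee_succ_b (a b : ℕ) :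
    4 * (b + 1) ^ 2 + (3 * a ^ 2 - a) / 2 + 4 * (b + 1) * a
      = (4 * b ^ 2 + (3 * a ^ 2 - a) / 2 + 4 * b * a) + (8 * b + 4 + 4 * a) := by
  have p1 : 4 * (b + 1) ^ 2 = 4 * b ^ 2 + (8 * b + 4) := by ring
  have p2 : 4 * (b + 1) * a = 4 * b * a + 4 * a := by ring
  omega

lemma gg_Trec1 (a b : ℕ) :
    Tt (a + 1) b * (1 - (X : PowerSeries ℚ) ^ (a + 1)) = X ^ (3 * a + 1 + 4 * b) * Tt a b := by
  rw [Tt, Tt, gg_ee_succ_a]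
  rw [show qq (a + 1) = qq a * (1 - (X : PowerSeries ℚ) ^ (a + 1)) from Finset.prod_range_succ _ _]
  rw [show qq a * (1 - (X : PowerSeries ℚ) ^ (a + 1)) * qfour b
      = qq a * qfour b * (1 - (X : PowerSeries ℚ) ^ (a + 1)) from by ring]
  rw [pow_add]
  have hinv := gg_inv_cancel (qq a * qfour b) (1 - (X : PowerSeries ℚ) ^ (a + 1))
    (gg_cc_one_sub _ (by omega))
  linear_combination ((X : PowerSeries ℚ) ^ (4 * b ^ 2 + (3 * a ^ 2 - a) / 2 + 4 * b * a)
    * X ^ (3 * a + 1 + 4 * b)) * hinv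

lemma gg_Trec2 (a b : ℕ) :
    Tt a (b + 1) * (1 - (X : PowerSeries ℚ) ^ (4 * b + 4)) = X ^ (8 * b + 4 + 4 * a) * Tt a b := by
  rw [Tt, Tt, gg_ee_succ_b]
  rw [show qfour (b + 1) = qfour b * (1 - (X : PowerSeries ℚ) ^ (4 * (b + 1))) from
    Finset.prod_range_succ _ _]
  rw [show 4 * (b + 1) = 4 * b + 4 from by ring]
  rw [show qq a * (qfour b * (1 - (X : PowerSeries ℚ) ^ (4 * b + 4)))
      = qq a * qfour b * (1 - (X : PowerSeries ℚ) ^ (4 * b + 4)) from by ring]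
  rw [pow_add]
  have hinv := gg_inv_cancel (qq a * qfour b) (1 - (X : PowerSeries ℚ) ^ (4 * b + 4))
    (gg_cc_one_sub _ (by omega))
  linear_combination ((X : PowerSeries ℚ) ^ (4 * b ^ 2 + (3 * a ^ 2 - a) / 2 + 4 * b * a)
    * X ^ (8 * b + 4 + 4 * a)) * hinv

lemma gg_Xp (c b i j k : ℕ) :
    (X : PowerSeries ℚ) ^ (c * i + b * j + k)
      = ((X : PowerSeries ℚ) ^ c) ^ i * ((X : PowerSeries ℚ) ^ b) ^ j * X ^ k := by
  rw [pow_add, pow_add, pow_mul, pow_mul]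

lemma gg_step (c b : ℕ) :
    ((X : PowerSeries ℚ) ^ (c + 2 * b + 2) + X ^ (c + 2 * b + 3) - X ^ (2 * b + 1)
        - X ^ (2 * c + 2 * b + 4)) * Tt (c + 2) b
      = (X ^ (2 * c + 6 * b + 6) - X ^ (2 * c + 2 * b + 2)) * Tt c (b + 1) := by
  have hW : ((1 - (X : PowerSeries ℚ) ^ (c + 1)) * (1 - X ^ (c + 2)) * (1 - X ^ (4 * b + 4)))
      ≠ 0 := by
    apply gg_ne_zero
    rw [map_mul, map_mul, gg_cc_one_sub _ (by omega), gg_cc_one_sub _ (by omega),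
      gg_cc_one_sub _ (by omega)]
    norm_num
  apply mul_right_cancel₀ hW
  have h1 := gg_Trec1 (c + 1) b
  have h2 := gg_Trec1 c b
  have h3 := gg_Trec2 c b
  simp only [show c + 1 + 1 = c + 2 from by omega, show 3 * (c + 1) + 1 + 4 * b
    = c * 3 + b * 4 + 4 from by ring, show 3 * c + 1 + 4 * b = c * 3 + b * 4 + 1 from by ring,
    show 8 * b + 4 + 4 * c = c * 4 + b * 8 + 4 from by ring] at h1 h2 h3
  rw [gg_Xp, gg_Xp, gg_Xp] at *
  simp only [show c + 2 * b + 2 = c * 1 + b * 2 + 2 from by ring,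
    show c + 2 * b + 3 = c * 1 + b * 2 + 3 from by ring,
    show 2 * b + 1 = c * 0 + b * 2 + 1 from by ring,
    show 2 * c + 2 * b + 4 = c * 2 + b * 2 + 4 from by ring,
    show c + 1 = c * 1 + b * 0 + 1 from by ring,
    show c + 2 = c * 1 + b * 0 + 2 from by ring,
    show 4 * b + 4 = c * 0 + b * 4 + 4 from by ring,
    show 2 * c + 6 * b + 6 = c * 2 + b * 6 + 6 from by ring,
    show 2 * c + 2 * b + 2 = c * 2 + b * 2 + 2 from by ring,
    gg_Xp] at h1 h2 h3 ⊢
  set A := (X : PowerSeries ℚ) ^ c with hA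
  set B := (X : PowerSeries ℚ) ^ b with hB
  -- h1 : Tt (c+2) b * (1 - A*1*X^2 ...) etc.
  linear_combination
    ((A * B ^ 2 * X ^ 2 + A * B ^ 2 * X ^ 3 - B ^ 2 * X - A ^ 2 * B ^ 2 * X ^ 4)
        * (1 - A * X) * (1 - B ^ 4 * X ^ 4)) * h1
    + ((A * B ^ 2 * X ^ 2 + A * B ^ 2 * X ^ 3 - B ^ 2 * X - A ^ 2 * B ^ 2 * X ^ 4)
        * (A ^ 3 * B ^ 4 * X ^ 4) * (1 - B ^ 4 * X ^ 4)) * h2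
    - ((A ^ 2 * B ^ 6 * X ^ 6 - A ^ 2 * B ^ 2 * X ^ 2) * (1 - A * X) * (1 - A * X ^ 2)) * h3

lemma gg_step' (c b e1 e2 e3 e4 f1 f2 g1 g2 b' : ℕ)
    (h1 : e1 = c + 2 * b + 2) (h2 : e2 = c + 2 * b + 3) (h3 : e3 = 2 * b + 1)
    (h4 : e4 = 2 * c + 2 * b + 4) (h5 : f1 = 2 * c + 6 * b + 6) (h6 : f2 = 2 * c + 2 * b + 2)
    (h7 : g1 = c + 2) (h8 : g2 = c) (h9 : b' = b + 1) :
    ((X : PowerSeries ℚ) ^ e1 + X ^ e2 - X ^ e3 - X ^ e4) * Tt g1 b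
      = (X ^ f1 - X ^ f2) * Tt g2 b' := by
  subst h1 h2 h3 h4 h5 h6 h9
  rw [h7, h8]
  exact gg_step c b

lemma gg_tele : ∀ (B m : ℕ), 2 * B + 2 ≤ m →
    ∑ b ∈ Finset.range (B + 1),
        ((X : PowerSeries ℚ) ^ m + X ^ (m + 1) - X ^ (2 * b + 1) - X ^ (2 * m + 2 * b))
          * Tt (m - 2 * b) b
      = (X ^ (2 * m + 2 * B + 2) - X ^ (2 * m - (2 * B + 2))) * Tt (m - (2 * B + 2)) (B + 1) := by
  intro B
  induction B with
  | zero =>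
    intro m hm
    rw [Finset.sum_range_one]
    exact gg_step' (m - 2) 0 m (m + 1) (2 * 0 + 1) (2 * m + 2 * 0) (2 * m + 2 * 0 + 2)
      (2 * m - (2 * 0 + 2)) (m - 2 * 0) (m - (2 * 0 + 2)) 1
      (by omega) (by omega) (by omega) (by omega) (by omega) (by omega) (by omega) (by omega) rfl
  | succ B ih =>
    intro m hm
    rw [Finset.sum_range_succ, ih m (by omega)]
    have hc := gg_step' (m - (2 * B + 4)) (B + 1) m (m + 1) (2 * (B + 1) + 1)
      (2 * m - (2 * B + 2)) (2 * m + 2 * (B + 1) + 2) (2 * m - (2 * (B + 1) + 2))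
      (m - 2 * (B + 1)) (m - (2 * (B + 1) + 2)) (B + 1 + 1)
      (by omega) (by omega) (by omega) (by omega) (by omega) (by omega) (by omega) (by omega) rfl
    simp only [show m - 2 * (B + 1) = m - (2 * B + 2) from by omega] at hc ⊢
    linear_combination hc

lemma gg_zs (M : ℕ) (hM : 1 ≤ M) :
    ∑ b ∈ Finset.range (M / 2 + 1),
        ((X : PowerSeries ℚ) ^ M + X ^ (M + 1) - X ^ (2 * b + 1) - X ^ (2 * M + 2 * b))
          * Tt (M - 2 * b) b = 0 := by
  rcases Nat.even_or_odd M with hpar | hpar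
  · -- M even, M = K + K with K ≥ 1
    obtain ⟨K, hK⟩ := hpar
    have hK1 : 1 ≤ K := by omega
    have ht := gg_tele (K - 1) M (by omega)
    simp only [show K - 1 + 1 = K from by omega,
      show 2 * M + 2 * (K - 1) + 2 = 2 * M + 2 * K from by omega,
      show 2 * M - (2 * (K - 1) + 2) = M from by omega,
      show M - (2 * (K - 1) + 2) = 0 from by omega] at ht
    rw [show M / 2 = K from by omega, Finset.sum_range_succ, ht]
    simp only [show M - 2 * K = 0 from by omega, show 2 * K + 1 = M + 1 from by omega]
    ring
  · -- M odd, M = 2K+1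
    obtain ⟨K, hK⟩ := hpar
    rcases Nat.eq_zero_or_pos K with h0 | hK1
    · subst h0
      rw [show M / 2 = 0 from by omega, Finset.sum_range_one]
      have : ((X : PowerSeries ℚ) ^ M + X ^ (M + 1) - X ^ (2 * 0 + 1) - X ^ (2 * M + 2 * 0))
          = 0 := by
        rw [show 2 * 0 + 1 = M from by omega, show 2 * M + 2 * 0 = M + 1 from by omega]
        ring
      rw [this, zero_mul]
    · have ht := gg_tele (K - 1) M (by omega)
      simp only [show K - 1 + 1 = K from by omega,
        show 2 * M + 2 * (K - 1) + 2 = 2 * M + 2 * K from by omega,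
        show 2 * M - (2 * (K - 1) + 2) = M + 1 from by omega,
        show M - (2 * (K - 1) + 2) = 1 from by omega] at ht
      rw [show M / 2 = K from by omega, Finset.sum_range_succ, ht]
      simp only [show M - 2 * K = 1 from by omega, show 2 * K + 1 = M from by omega]
      ring

lemma gg_rec (m : ℕ) :
    (1 - (X : PowerSeries ℚ) ^ (2 * m + 2)) * ∑ b ∈ Finset.range ((m + 1) / 2 + 1), Tt (m + 1 - 2 * b) b
      = ((X : PowerSeries ℚ) ^ (2 * m + 1) + X ^ (4 * m + 2)) * ∑ b ∈ Finset.range (m / 2 + 1), Tt (m - 2 * b) b := by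
  apply mul_left_cancel₀ (pow_ne_zero (m + 1) (PowerSeries.X_ne_zero (R := ℚ)))
  have hterm : ∀ b, 2 * b ≤ m →
      (X : PowerSeries ℚ) ^ (m + 1) * ((X ^ (2 * m + 1) + X ^ (4 * m + 2)) * Tt (m - 2 * b) b)
        = (X ^ (2 * b + 1) + X ^ (2 * m + 2 * b + 2))
            * ((1 - X ^ (m + 1 - 2 * b)) * Tt (m + 1 - 2 * b) b) := by
    intro b hb
    have t1 := gg_Trec1 (m - 2 * b) b
    simp only [show m - 2 * b + 1 = m + 1 - 2 * b from by omega,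
      show 3 * (m - 2 * b) + 1 + 4 * b = 3 * m + 1 - 2 * b from by omega] at t1
    have p1 : (X : PowerSeries ℚ) ^ (2 * b + 1) * X ^ (3 * m + 1 - 2 * b)
        = X ^ (m + 1) * X ^ (2 * m + 1) := by
      rw [← pow_add, ← pow_add]; congr 1; omega
    have p2 : (X : PowerSeries ℚ) ^ (2 * m + 2 * b + 2) * X ^ (3 * m + 1 - 2 * b)
        = X ^ (m + 1) * X ^ (4 * m + 2) := by
      rw [← pow_add, ← pow_add]; congr 1; omega
    linear_combination (-(X ^ (2 * b + 1) + X ^ (2 * m + 2 * b + 2) : PowerSeries ℚ)) * t1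
      - (Tt (m - 2 * b) b) * p1 - (Tt (m - 2 * b) b) * p2
  have hsum : (X : PowerSeries ℚ) ^ (m + 1)
        * (((X : PowerSeries ℚ) ^ (2 * m + 1) + X ^ (4 * m + 2)) * ∑ b ∈ Finset.range (m / 2 + 1), Tt (m - 2 * b) b)
      = ∑ b ∈ Finset.range ((m + 1) / 2 + 1),
          ((X : PowerSeries ℚ) ^ (2 * b + 1) + X ^ (2 * m + 2 * b + 2))
            * ((1 - X ^ (m + 1 - 2 * b)) * Tt (m + 1 - 2 * b) b) := by
    rw [Finset.mul_sum, Finset.mul_sum]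
    rcases Nat.even_or_odd m with hpar | hpar
    · obtain ⟨K, hK⟩ := hpar
      rw [show (m + 1) / 2 = m / 2 from by omega]
      apply Finset.sum_congr rfl
      intro b hb
      rw [Finset.mem_range] at hb
      exact hterm b (by omega)
    · obtain ⟨K, hK⟩ := hpar
      rw [show (m + 1) / 2 = m / 2 + 1 from by omega]
      conv_rhs => rw [Finset.sum_range_succ]
      rw [show m + 1 - 2 * (m / 2 + 1) = 0 from by omega]
      rw [pow_zero, sub_self, zero_mul, mul_zero, add_zero]
      apply Finset.sum_congr rfl
      intro b hb
      rw [Finset.mem_range] at hb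
      exact hterm b (by omega)
  rw [hsum, Finset.mul_sum, Finset.mul_sum, ← sub_eq_zero, ← Finset.sum_sub_distrib]
  have key := gg_zs (m + 1) (by omega)
  refine Eq.trans (Finset.sum_congr rfl ?_) key
  intro b hb
  rw [Finset.mem_range] at hb
  have hb' : 2 * b ≤ m + 1 := by omega
  have p1 : (X : PowerSeries ℚ) ^ (2 * b + 1) * X ^ (m + 1 - 2 * b) = X ^ (m + 1 + 1) := by
    rw [← pow_add]; congr 1; omega
  have p2 : (X : PowerSeries ℚ) ^ (2 * m + 2 * b + 2) * X ^ (m + 1 - 2 * b)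
      = X ^ (m + 1) * X ^ (2 * m + 2) := by
    rw [← pow_add, ← pow_add]; congr 1; omega
  linear_combination (Tt (m + 1 - 2 * b) b) * p1 + (Tt (m + 1 - 2 * b) b) * p2

lemma gg_main (m : ℕ) :
    (X : PowerSeries ℚ) ^ (m ^ 2) * nqodd m * (qsq m)⁻¹
      = ∑ b ∈ Finset.range (m / 2 + 1), Tt (m - 2 * b) b := by
  induction m with
  | zero =>
    rw [Finset.sum_range_one]
    simp only [Tt, qq, qsq, qfour, nqodd, Finset.range_zero, Finset.prod_empty]
    norm_num
  | succ m ih =>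
    have hne : (1 - (X : PowerSeries ℚ) ^ (2 * m + 2)) ≠ 0 :=
      gg_ne_zero (gg_cc_one_sub _ (by omega))
    apply mul_left_cancel₀ hne
    have hq : qsq (m + 1) = qsq m * (1 - (X : PowerSeries ℚ) ^ (2 * m + 2)) := by
      rw [qsq, Finset.prod_range_succ, show 2 * (m + 1) = 2 * m + 2 from by ring]
      rfl
    have hn : nqodd (m + 1) = nqodd m * (1 + (X : PowerSeries ℚ) ^ (2 * m + 1)) :=
      Finset.prod_range_succ _ _
    have hX : (X : PowerSeries ℚ) ^ ((m + 1) ^ 2) = X ^ (m ^ 2) * X ^ (2 * m + 1) := by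
      rw [← pow_add]; congr 1; ring
    have hinv := gg_inv_cancel (qsq m) (1 - (X : PowerSeries ℚ) ^ (2 * m + 2))
      (gg_cc_one_sub _ (by omega))
    have hstep : (1 - (X : PowerSeries ℚ) ^ (2 * m + 2))
          * ((X : PowerSeries ℚ) ^ ((m + 1) ^ 2) * nqodd (m + 1) * (qsq (m + 1))⁻¹)
        = ((X : PowerSeries ℚ) ^ (2 * m + 1) + X ^ (4 * m + 2))
          * ((X : PowerSeries ℚ) ^ (m ^ 2) * nqodd m * (qsq m)⁻¹) := by
      rw [hq, hn, hX]
      linear_combination ((X : PowerSeries ℚ) ^ (m ^ 2) * X ^ (2 * m + 1)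
        * (nqodd m * (1 + (X : PowerSeries ℚ) ^ (2 * m + 1)))) * hinv
    rw [hstep, ih]
    exact (gg_rec m).symm


/-- Identity (5.1): `∑_{n≥0} q^{n²}(-q;q²)_n x^n/(q²;q²)_n
= ∑_{n₁,n₂≥0} q^{4n₂² + (3n₁² - n₁)/2 + 4n₂n₁} x^{2n₂+n₁}/((q;q)_{n₁}(q⁴;q⁴)_{n₂})`,
stated via extraction of the coefficient of `q^N x^m` from both sides. -/
theorem gollnitz_gordon_capparelli_identity (N m : ℕ) :
    PowerSeries.coeff (R := ℚ) N ((X : PowerSeries ℚ) ^ (m ^ 2) * nqodd m * (qsq m)⁻¹) =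
      ∑ p ∈ (Finset.range (m + 1) ×ˢ Finset.range (m + 1)).filter
          (fun p => p.1 + 2 * p.2 = m),
        PowerSeries.coeff (R := ℚ) N
          ((X : PowerSeries ℚ) ^
              (4 * p.2 ^ 2 + (3 * p.1 ^ 2 - p.1) / 2 + 4 * p.2 * p.1) *
            (qq p.1 * qfour p.2)⁻¹) := by
  have conv : ∑ p ∈ (Finset.range (m + 1) ×ˢ Finset.range (m + 1)).filter
          (fun p => p.1 + 2 * p.2 = m),
        ((X : PowerSeries ℚ) ^ (4 * p.2 ^ 2 + (3 * p.1 ^ 2 - p.1) / 2 + 4 * p.2 * p.1) *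
            (qq p.1 * qfour p.2)⁻¹)
      = ∑ b ∈ Finset.range (m / 2 + 1), Tt (m - 2 * b) b := by
    apply Finset.sum_nbij' (i := fun p => p.2) (j := fun b => (m - 2 * b, b))
    · intro p hp
      simp only [Finset.mem_filter, Finset.mem_product, Finset.mem_range] at hp
      rw [Finset.mem_range]
      omega
    · intro b hb
      rw [Finset.mem_range] at hb
      simp only [Finset.mem_filter, Finset.mem_product, Finset.mem_range]
      omega
    · intro p hp
      simp only [Finset.mem_filter, Finset.mem_product, Finset.mem_range] at hp
      have : m - 2 * p.2 = p.1 := by omega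
      rw [this]
    · intro b hb
      rfl
    · intro p hp
      simp only [Finset.mem_filter, Finset.mem_product, Finset.mem_range] at hp
      have : m - 2 * p.2 = p.1 := by omega
      rw [Tt, this]
  rw [gg_main m, ← conv, map_sum]
end

section
/- The identity ∑_{n_1,n_2,n_3≥0} q^{(9n_3²+5n_3)/2 + 2n_2² + n_2 + n_1² + 6n_3n_2 + 3n_3n_1 + 2n_2n_1} (−q;q²)_{n_2} x^{3n_3+2n_2+n_1} / ((q;q)_{n_1}(q²;q²)_{n_2}(q³;q³)_{n_3}) = ∑_{n_1,m_2,n_3,m_4≥0} q^{8m_4²+2m_4 + (9n_3²+5n_3)/2 + (5m_2²+m_2)/2 + n_1² + 12m_4n_3 + 8m_4m_2 + 4m_4n_1 + 6n_3m_2 + 3n_3n_1 + 2m_2n_1} x^{4m_4+3n_3+2m_2+n_1} / ((q;q)_{n_1}(q;q)_{m_2}(q³;q³)_{n_3}(q⁴;q⁴)_{m_4}) holds as formal power series in q and x. -/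
open Finset PowerSeries

lemma const_one_sub_pow (k : ℕ) (hk : 0 < k) :
    constantCoeff (1 - (X : PowerSeries ℚ) ^ k) = 1 := by
  rw [map_sub, map_one, map_pow, constantCoeff_X, zero_pow (by omega), sub_zero]

lemma const_one_add_pow (k : ℕ) (hk : 0 < k) :
    constantCoeff (1 + (X : PowerSeries ℚ) ^ k) = 1 := by
  rw [map_add, map_one, map_pow, constantCoeff_X, zero_pow (by omega), add_zero]

lemma one_sub_pow_ne (k : ℕ) (hk : 0 < k) :
    constantCoeff (1 - (X : PowerSeries ℚ) ^ k) ≠ 0 := by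
  rw [const_one_sub_pow k hk]; norm_num

lemma const_qq (n : ℕ) : constantCoeff (qq n) = 1 := by
  rw [qq, map_prod]
  exact Finset.prod_eq_one fun j _ => const_one_sub_pow _ (by omega)

lemma const_qsq (n : ℕ) : constantCoeff (qsq n) = 1 := by
  rw [qsq, map_prod]
  exact Finset.prod_eq_one fun j _ => const_one_sub_pow _ (by omega)

lemma const_qfour (n : ℕ) : constantCoeff (qfour n) = 1 := by
  rw [qfour, map_prod]
  exact Finset.prod_eq_one fun j _ => const_one_sub_pow _ (by omega)

lemma cancel_inv (f g : PowerSeries ℚ) (hg : constantCoeff g ≠ 0) :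
    g * (f * g)⁻¹ = f⁻¹ := by
  rw [PowerSeries.mul_inv_rev, ← mul_assoc, PowerSeries.mul_inv_cancel g hg, one_mul]

lemma inv_mul_inv' (f g : PowerSeries ℚ) : f⁻¹ * g⁻¹ = (f * g)⁻¹ := by
  rw [PowerSeries.mul_inv_rev, mul_comm]

lemma qq_succ (n : ℕ) : qq (n + 1) = qq n * (1 - (X : PowerSeries ℚ) ^ (n + 1)) := by
  rw [qq, qq, Finset.prod_range_succ]

lemma qsq_succ (n : ℕ) :
    qsq (n + 1) = qsq n * (1 - (X : PowerSeries ℚ) ^ (2 * n + 2)) := by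
  rw [qsq, qsq, Finset.prod_range_succ, show 2 * (n + 1) = 2 * n + 2 from by ring]

lemma qfour_succ (n : ℕ) :
    qfour (n + 1) = qfour n * (1 - (X : PowerSeries ℚ) ^ (4 * n + 4)) := by
  rw [qfour, qfour, Finset.prod_range_succ, show 4 * (n + 1) = 4 * n + 4 from by ring]

lemma nqodd_succ (n : ℕ) :
    nqodd (n + 1) = nqodd n * (1 + (X : PowerSeries ℚ) ^ (2 * n + 1)) := by
  rw [nqodd, nqodd, Finset.prod_range_succ]

def P (M : ℕ) : Finset (ℕ × ℕ) :=
  (Finset.range (M + 1) ×ˢ Finset.range (M + 1)).filter (fun p => p.1 + 2 * p.2 = M)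

lemma mem_P {M : ℕ} {p : ℕ × ℕ} : p ∈ P M ↔ p.1 + 2 * p.2 = M := by
  simp only [P, Finset.mem_filter, Finset.mem_product, Finset.mem_range]
  omega

lemma shift1 (M : ℕ) (g : ℕ → ℕ → PowerSeries ℚ) :
    ∑ p ∈ (P (M + 1)).filter (fun p => 1 ≤ p.1), g p.1 p.2
      = ∑ p ∈ P M, g (p.1 + 1) p.2 := by
  refine (Finset.sum_nbij' (fun p => (p.1 + 1, p.2)) (fun p => (p.1 - 1, p.2))
    ?_ ?_ ?_ ?_ ?_).symm
  · rintro ⟨x, y⟩ ha; simp only [Finset.mem_filter, mem_P] at *; omega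
  · rintro ⟨x, y⟩ ha; simp only [Finset.mem_filter, mem_P] at ha ⊢; omega
  · rintro ⟨x, y⟩ ha; simp
  · rintro ⟨x, y⟩ ha; simp only [Finset.mem_filter, mem_P] at ha
    simp only [Prod.mk.injEq, and_true, true_and]; omega
  · rintro ⟨x, y⟩ ha; rfl

lemma shift2 (M : ℕ) (g : ℕ → ℕ → PowerSeries ℚ) :
    ∑ p ∈ (P (M + 2)).filter (fun p => 1 ≤ p.2), g p.1 p.2
      = ∑ p ∈ P M, g p.1 (p.2 + 1) := by
  refine (Finset.sum_nbij' (fun p => (p.1, p.2 + 1)) (fun p => (p.1, p.2 - 1))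
    ?_ ?_ ?_ ?_ ?_).symm
  · rintro ⟨x, y⟩ ha; simp only [Finset.mem_filter, mem_P] at *; omega
  · rintro ⟨x, y⟩ ha; simp only [Finset.mem_filter, mem_P] at ha ⊢; omega
  · rintro ⟨x, y⟩ ha; simp
  · rintro ⟨x, y⟩ ha; simp only [Finset.mem_filter, mem_P] at ha
    simp only [Prod.mk.injEq, and_true, true_and]; omega
  · rintro ⟨x, y⟩ ha; rfl

noncomputable def Sr (M : ℕ) : PowerSeries ℚ :=
  ∑ p ∈ P M, (X : PowerSeries ℚ) ^ (Nat.choose p.1 2) * (qq p.1 * qfour p.2)⁻¹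

noncomputable def Tr (M : ℕ) : PowerSeries ℚ :=
  ∑ p ∈ P M, (X : PowerSeries ℚ) ^ (p.1 + Nat.choose p.1 2) * (qq p.1 * qfour p.2)⁻¹

lemma choose_succ_two (a : ℕ) : Nat.choose (a + 1) 2 = Nat.choose a 2 + a := by
  show Nat.choose a 1 + Nat.choose a 2 = _
  rw [Nat.choose_one_right]; omega

lemma two_choose_two (a : ℕ) : 2 * Nat.choose a 2 + a = a ^ 2 := by
  induction a with
  | zero => simp
  | succ b ih =>
    rw [choose_succ_two, show (b + 1) ^ 2 = b ^ 2 + 2 * b + 1 from by ring]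
    linarith [ih]

lemma step_qq (a b : ℕ) :
    (1 - (X : PowerSeries ℚ) ^ (a + 1)) * (qq (a + 1) * qfour b)⁻¹
      = (qq a * qfour b)⁻¹ := by
  rw [qq_succ,
    show qq a * (1 - (X : PowerSeries ℚ) ^ (a + 1)) * qfour b
        = qq a * qfour b * (1 - (X : PowerSeries ℚ) ^ (a + 1)) from by ring]
  exact cancel_inv _ _ (one_sub_pow_ne _ (by omega))

lemma step_qfour (a b : ℕ) :
    (1 - (X : PowerSeries ℚ) ^ (4 * b + 4)) * (qq a * qfour (b + 1))⁻¹
      = (qq a * qfour b)⁻¹ := by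
  rw [qfour_succ,
    show qq a * (qfour b * (1 - (X : PowerSeries ℚ) ^ (4 * b + 4)))
        = qq a * qfour b * (1 - (X : PowerSeries ℚ) ^ (4 * b + 4)) from by ring]
  exact cancel_inv _ _ (one_sub_pow_ne _ (by omega))

lemma filter_fst (M : ℕ) (G : ℕ × ℕ → PowerSeries ℚ) :
    ∑ p ∈ P M, (1 - (X : PowerSeries ℚ) ^ p.1) * G p
      = ∑ p ∈ (P M).filter (fun p => 1 ≤ p.1),
          (1 - (X : PowerSeries ℚ) ^ p.1) * G p := by
  refine (Finset.sum_filter_of_ne (fun x _ hne => ?_)).symm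
  by_contra h
  apply hne
  have hx : x.1 = 0 := by omega
  rw [hx]; simp

lemma filter_snd (M : ℕ) (G : ℕ × ℕ → PowerSeries ℚ) :
    ∑ p ∈ P M, (1 - (X : PowerSeries ℚ) ^ (4 * p.2)) * G p
      = ∑ p ∈ (P M).filter (fun p => 1 ≤ p.2),
          (1 - (X : PowerSeries ℚ) ^ (4 * p.2)) * G p := by
  refine (Finset.sum_filter_of_ne (fun x _ hne => ?_)).symm
  by_contra h
  apply hne
  have hx : x.2 = 0 := by omega
  rw [hx]; simp

lemma term_A (K : ℕ) :
    ∑ p ∈ P K,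
        (1 - (X : PowerSeries ℚ) ^ (p.1 + 1))
          * ((X : PowerSeries ℚ) ^ (Nat.choose (p.1 + 1) 2) * (qq (p.1 + 1) * qfour p.2)⁻¹)
      = Tr K := by
  rw [Tr]
  refine Finset.sum_congr rfl fun p _ => ?_
  rw [show (1 - (X : PowerSeries ℚ) ^ (p.1 + 1))
        * ((X : PowerSeries ℚ) ^ (Nat.choose (p.1 + 1) 2) * (qq (p.1 + 1) * qfour p.2)⁻¹)
      = (X : PowerSeries ℚ) ^ (Nat.choose (p.1 + 1) 2)
        * ((1 - (X : PowerSeries ℚ) ^ (p.1 + 1)) * (qq (p.1 + 1) * qfour p.2)⁻¹) from by ring,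
    step_qq, choose_succ_two, Nat.add_comm (Nat.choose p.1 2) p.1]

lemma Sr_succ (M : ℕ) : Sr (M + 1) = Tr (M + 1) + Tr M := by
  have h1 : Sr (M + 1) = Tr (M + 1)
      + ∑ p ∈ P (M + 1),
          (1 - (X : PowerSeries ℚ) ^ p.1)
            * ((X : PowerSeries ℚ) ^ (Nat.choose p.1 2) * (qq p.1 * qfour p.2)⁻¹) := by
    rw [Sr, Tr, ← Finset.sum_add_distrib]
    refine Finset.sum_congr rfl fun p _ => ?_
    rw [pow_add]; ring
  rw [h1]
  congr 1
  rw [filter_fst, shift1 M (fun a b => (1 - (X : PowerSeries ℚ) ^ a)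
      * ((X : PowerSeries ℚ) ^ (Nat.choose a 2) * (qq a * qfour b)⁻¹))]
  exact term_A _

lemma Sr_rec (M : ℕ) :
    (1 - (X : PowerSeries ℚ) ^ (2 * M + 4)) * Sr (M + 2)
      = Tr (M + 1) + Tr M + (X : PowerSeries ℚ) ^ (2 * M + 3) * Sr (M + 1) := by
  rw [Sr, Finset.mul_sum]
  have split : ∀ p ∈ P (M + 2),
      (1 - (X : PowerSeries ℚ) ^ (2 * M + 4))
          * ((X : PowerSeries ℚ) ^ (Nat.choose p.1 2) * (qq p.1 * qfour p.2)⁻¹)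
        = (1 - (X : PowerSeries ℚ) ^ p.1)
            * ((X : PowerSeries ℚ) ^ (Nat.choose p.1 2) * (qq p.1 * qfour p.2)⁻¹)
          + (1 - (X : PowerSeries ℚ) ^ (4 * p.2))
            * ((X : PowerSeries ℚ) ^ p.1
              * ((X : PowerSeries ℚ) ^ (Nat.choose p.1 2) * (qq p.1 * qfour p.2)⁻¹))
          + (1 - (X : PowerSeries ℚ) ^ p.1)
            * ((X : PowerSeries ℚ) ^ (p.1 + 4 * p.2)
              * ((X : PowerSeries ℚ) ^ (Nat.choose p.1 2) * (qq p.1 * qfour p.2)⁻¹)) := by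
    intro p hp
    rw [mem_P] at hp
    rw [show 2 * M + 4 = 2 * p.1 + 4 * p.2 from by omega]
    ring
  rw [Finset.sum_congr rfl split, Finset.sum_add_distrib, Finset.sum_add_distrib]
  congr 1
  · congr 1
    · rw [filter_fst, shift1 (M + 1) (fun a b => (1 - (X : PowerSeries ℚ) ^ a)
          * ((X : PowerSeries ℚ) ^ (Nat.choose a 2) * (qq a * qfour b)⁻¹))]
      exact term_A _
    · rw [filter_snd, shift2 M (fun a b => (1 - (X : PowerSeries ℚ) ^ (4 * b))
          * ((X : PowerSeries ℚ) ^ a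
            * ((X : PowerSeries ℚ) ^ (Nat.choose a 2) * (qq a * qfour b)⁻¹))), Tr]
      refine Finset.sum_congr rfl fun p _ => ?_
      rw [show (1 - (X : PowerSeries ℚ) ^ (4 * (p.2 + 1)))
            * ((X : PowerSeries ℚ) ^ p.1
              * ((X : PowerSeries ℚ) ^ (Nat.choose p.1 2) * (qq p.1 * qfour (p.2 + 1))⁻¹))
          = (X : PowerSeries ℚ) ^ (p.1 + Nat.choose p.1 2)
            * ((1 - (X : PowerSeries ℚ) ^ (4 * p.2 + 4)) * (qq p.1 * qfour (p.2 + 1))⁻¹) from by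
            rw [show 4 * (p.2 + 1) = 4 * p.2 + 4 from by ring, pow_add]; ring,
        step_qfour]
  · rw [filter_fst, shift1 (M + 1) (fun a b => (1 - (X : PowerSeries ℚ) ^ a)
        * ((X : PowerSeries ℚ) ^ (a + 4 * b)
          * ((X : PowerSeries ℚ) ^ (Nat.choose a 2) * (qq a * qfour b)⁻¹))), Sr,
      Finset.mul_sum]
    refine Finset.sum_congr rfl fun p hp => ?_
    rw [mem_P] at hp
    rw [show (1 - (X : PowerSeries ℚ) ^ (p.1 + 1))
          * ((X : PowerSeries ℚ) ^ (p.1 + 1 + 4 * p.2)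
            * ((X : PowerSeries ℚ) ^ (Nat.choose (p.1 + 1) 2) * (qq (p.1 + 1) * qfour p.2)⁻¹))
        = (X : PowerSeries ℚ) ^ (p.1 + 1 + 4 * p.2 + Nat.choose (p.1 + 1) 2)
          * ((1 - (X : PowerSeries ℚ) ^ (p.1 + 1)) * (qq (p.1 + 1) * qfour p.2)⁻¹) from by
          rw [pow_add]; ring,
      step_qq,
      show p.1 + 1 + 4 * p.2 + Nat.choose (p.1 + 1) 2
          = 2 * M + 3 + Nat.choose p.1 2 from by rw [choose_succ_two]; omega,
      pow_add, mul_assoc]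

lemma one_sub_pow_ne_zero (k : ℕ) (hk : 0 < k) :
    (1 - (X : PowerSeries ℚ) ^ k) ≠ 0 := by
  intro h
  have h2 := const_one_sub_pow k hk
  rw [h] at h2
  simp at h2

theorem star_qsq : ∀ N, nqodd N * (qsq N)⁻¹ = Sr N
  | 0 => by
    have hP : P 0 = {(0, 0)} := by decide
    rw [Sr, hP, Finset.sum_singleton]
    simp only [nqodd, qsq, qq, qfour, Finset.range_zero, Finset.prod_empty, pow_zero,
      Nat.choose]
    norm_num
  | 1 => by
    have hP : P 1 = {(1, 0)} := by decide
    rw [Sr, hP, Finset.sum_singleton]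
    simp only [nqodd, qsq, qq, qfour, Finset.prod_range_one, Finset.range_zero,
      Finset.prod_empty]
    norm_num
    rw [show (1 - (X : PowerSeries ℚ) ^ 2) = (1 - X) * (1 + X) from by ring]
    rw [show ((1 : PowerSeries ℚ) - X) * (1 + X) = (1 - X) * (1 + X) from rfl]
    exact cancel_inv (1 - X) (1 + X) (by
      rw [show ((1 : PowerSeries ℚ) + X) = 1 + X ^ 1 from by rw [pow_one]]
      rw [const_one_add_pow 1 one_pos]; norm_num)
  | (M + 2) => by
    have ih := star_qsq (M + 1)
    have hne := one_sub_pow_ne_zero (2 * M + 4) (by omega)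
    apply mul_left_cancel₀ hne
    have h2 : (1 - (X : PowerSeries ℚ) ^ (2 * M + 4)) * Sr (M + 2)
        = (1 + (X : PowerSeries ℚ) ^ (2 * M + 3)) * Sr (M + 1) := by
      rw [Sr_rec, Sr_succ]; ring
    have h3 : (1 - (X : PowerSeries ℚ) ^ (2 * M + 4)) * (nqodd (M + 2) * (qsq (M + 2))⁻¹)
        = (1 + (X : PowerSeries ℚ) ^ (2 * M + 3)) * (nqodd (M + 1) * (qsq (M + 1))⁻¹) := by
      rw [nqodd_succ, qsq_succ, show 2 * (M + 1) + 1 = 2 * M + 3 from by ring,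
        show 2 * (M + 1) + 2 = 2 * M + 4 from by ring]
      rw [show (1 - (X : PowerSeries ℚ) ^ (2 * M + 4))
            * (nqodd (M + 1) * (1 + (X : PowerSeries ℚ) ^ (2 * M + 3))
              * (qsq (M + 1) * (1 - (X : PowerSeries ℚ) ^ (2 * M + 4)))⁻¹)
          = (1 + (X : PowerSeries ℚ) ^ (2 * M + 3)) * nqodd (M + 1)
            * ((1 - (X : PowerSeries ℚ) ^ (2 * M + 4))
              * (qsq (M + 1) * (1 - (X : PowerSeries ℚ) ^ (2 * M + 4)))⁻¹) from by ring,
        cancel_inv _ _ (one_sub_pow_ne (2 * M + 4) (by omega))]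
      ring
    rw [h3, h2, ih]

lemma expo (n1 m2 n3 m4 : ℕ) :
    (9 * n3 ^ 2 + 5 * n3) / 2 + 2 * (m2 + 2 * m4) ^ 2 + (m2 + 2 * m4) + n1 ^ 2
        + 6 * n3 * (m2 + 2 * m4) + 3 * n3 * n1 + 2 * (m2 + 2 * m4) * n1 + Nat.choose m2 2
      = 8 * m4 ^ 2 + 2 * m4 + (9 * n3 ^ 2 + 5 * n3) / 2 + (5 * m2 ^ 2 + m2) / 2 + n1 ^ 2
        + 12 * m4 * n3 + 8 * m4 * m2 + 4 * m4 * n1 + 6 * n3 * m2 + 3 * n3 * n1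
        + 2 * m2 * n1 := by
  have hc := two_choose_two m2
  obtain ⟨k, hk⟩ := Nat.even_mul_succ_self m2
  have hexp : m2 * (m2 + 1) = m2 ^ 2 + m2 := by ring
  have hm : m2 ^ 2 + m2 = 2 * k := by omega
  have h5 : (5 * m2 ^ 2 + m2) / 2 = 2 * m2 ^ 2 + k := by omega
  rw [h5]
  have key : 2 * ((9 * n3 ^ 2 + 5 * n3) / 2 + 2 * (m2 + 2 * m4) ^ 2 + (m2 + 2 * m4) + n1 ^ 2
        + 6 * n3 * (m2 + 2 * m4) + 3 * n3 * n1 + 2 * (m2 + 2 * m4) * n1 + Nat.choose m2 2)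
      = 2 * (8 * m4 ^ 2 + 2 * m4 + (9 * n3 ^ 2 + 5 * n3) / 2 + (2 * m2 ^ 2 + k) + n1 ^ 2
        + 12 * m4 * n3 + 8 * m4 * m2 + 4 * m4 * n1 + 6 * n3 * m2 + 3 * n3 * n1
        + 2 * m2 * n1) := by
    zify
    zify at hc hm
    linear_combination hc + hm
  omega

/-- Identity (5.2): the triple-sum and quadruple-sum forms of the series in the
Kanade–Russell conjecture I₅ agree, stated via extraction of the coefficient of
`q^n x^m` on both sides; `p = (n₁, n₂, n₃)` and `p = (n₁, m₂, n₃, m₄)`. -/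
theorem kr5_alternative_series (n m : ℕ) :
    (∑ p ∈ (Finset.range (m + 1) ×ˢ Finset.range (m + 1) ×ˢ Finset.range (m + 1)).filter
          (fun p => p.1 + 2 * p.2.1 + 3 * p.2.2 = m),
        PowerSeries.coeff n
          ((X : PowerSeries ℚ) ^
              ((9 * p.2.2 ^ 2 + 5 * p.2.2) / 2 + 2 * p.2.1 ^ 2 + p.2.1 + p.1 ^ 2 +
                6 * p.2.2 * p.2.1 + 3 * p.2.2 * p.1 + 2 * p.2.1 * p.1) *
            nqodd p.2.1 * (qq p.1 * qsq p.2.1 * qcube p.2.2)⁻¹)) =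
      ∑ p ∈ (Finset.range (m + 1) ×ˢ Finset.range (m + 1) ×ˢ Finset.range (m + 1) ×ˢ
            Finset.range (m + 1)).filter
          (fun p => p.1 + 2 * p.2.1 + 3 * p.2.2.1 + 4 * p.2.2.2 = m),
        PowerSeries.coeff n
          ((X : PowerSeries ℚ) ^
              (8 * p.2.2.2 ^ 2 + 2 * p.2.2.2 + (9 * p.2.2.1 ^ 2 + 5 * p.2.2.1) / 2 +
                (5 * p.2.1 ^ 2 + p.2.1) / 2 + p.1 ^ 2 +
                12 * p.2.2.2 * p.2.2.1 + 8 * p.2.2.2 * p.2.1 + 4 * p.2.2.2 * p.1 +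
                6 * p.2.2.1 * p.2.1 + 3 * p.2.2.1 * p.1 + 2 * p.2.1 * p.1) *
            (qq p.1 * qq p.2.1 * qcube p.2.2.1 * qfour p.2.2.2)⁻¹) := by
  have hL : ∀ p ∈ (Finset.range (m + 1) ×ˢ Finset.range (m + 1)
        ×ˢ Finset.range (m + 1)).filter
          (fun p : ℕ × ℕ × ℕ => p.1 + 2 * p.2.1 + 3 * p.2.2 = m),
      PowerSeries.coeff n
          ((X : PowerSeries ℚ) ^
              ((9 * p.2.2 ^ 2 + 5 * p.2.2) / 2 + 2 * p.2.1 ^ 2 + p.2.1 + p.1 ^ 2 +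
                6 * p.2.2 * p.2.1 + 3 * p.2.2 * p.1 + 2 * p.2.1 * p.1) *
            nqodd p.2.1 * (qq p.1 * qsq p.2.1 * qcube p.2.2)⁻¹)
        = ∑ r ∈ P p.2.1,
            PowerSeries.coeff n
              ((X : PowerSeries ℚ) ^
                  ((9 * p.2.2 ^ 2 + 5 * p.2.2) / 2 + 2 * p.2.1 ^ 2 + p.2.1 + p.1 ^ 2 +
                    6 * p.2.2 * p.2.1 + 3 * p.2.2 * p.1 + 2 * p.2.1 * p.1
                    + Nat.choose r.1 2) *
                (qq p.1 * qq r.1 * qcube p.2.2 * qfour r.2)⁻¹) := by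
    intro p _
    rw [show qq p.1 * qsq p.2.1 * qcube p.2.2 = qq p.1 * qcube p.2.2 * qsq p.2.1 from by
        ring, ← inv_mul_inv',
      show (X : PowerSeries ℚ) ^
            ((9 * p.2.2 ^ 2 + 5 * p.2.2) / 2 + 2 * p.2.1 ^ 2 + p.2.1 + p.1 ^ 2 +
              6 * p.2.2 * p.2.1 + 3 * p.2.2 * p.1 + 2 * p.2.1 * p.1) *
          nqodd p.2.1 * ((qq p.1 * qcube p.2.2)⁻¹ * (qsq p.2.1)⁻¹)
        = (X : PowerSeries ℚ) ^
            ((9 * p.2.2 ^ 2 + 5 * p.2.2) / 2 + 2 * p.2.1 ^ 2 + p.2.1 + p.1 ^ 2 +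
              6 * p.2.2 * p.2.1 + 3 * p.2.2 * p.1 + 2 * p.2.1 * p.1) *
          ((qq p.1 * qcube p.2.2)⁻¹ * (nqodd p.2.1 * (qsq p.2.1)⁻¹)) from by ring,
      star_qsq, Sr, Finset.mul_sum, Finset.mul_sum, map_sum]
    refine Finset.sum_congr rfl fun r _ => ?_
    congr 1
    simp only [PowerSeries.mul_inv_rev]
    ring
  rw [Finset.sum_congr rfl hL, Finset.sum_sigma']
  refine Finset.sum_nbij' (fun x => (x.1.1, x.2.1, x.1.2.2, x.2.2))
    (fun p => ⟨(p.1, p.2.1 + 2 * p.2.2.2, p.2.2.1), (p.2.1, p.2.2.2)⟩) ?_ ?_ ?_ ?_ ?_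
  · rintro ⟨⟨a, b, c⟩, ⟨d, e⟩⟩ hx
    simp only [Finset.mem_sigma, Finset.mem_filter, Finset.mem_product, Finset.mem_range,
      mem_P, and_true] at hx ⊢
    omega
  · rintro ⟨a, b, c, d⟩ hx
    simp only [Finset.mem_sigma, Finset.mem_filter, Finset.mem_product, Finset.mem_range,
      mem_P, and_true] at hx ⊢
    omega
  · rintro ⟨⟨a, b, c⟩, ⟨d, e⟩⟩ hx
    simp only [Finset.mem_sigma, Finset.mem_filter, Finset.mem_product, Finset.mem_range,
      mem_P] at hx
    dsimp only
    rw [hx.2]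
  · rintro ⟨a, b, c, d⟩ hx; rfl
  · rintro ⟨⟨a, b, c⟩, ⟨d, e⟩⟩ hx
    simp only [Finset.mem_sigma, Finset.mem_filter, Finset.mem_product, Finset.mem_range,
      mem_P] at hx
    dsimp only
    have hb : b = d + 2 * e := by omega
    rw [hb, expo a d c e]
end
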